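/- arXiv:2602.17637 — 7 statements merged into one kernel-verified Lean document; each statement's English description precedes it below -/
import Mathlib

section
/- Let S be a finite set of points in the real plane ℝ², not all lying on one line. Then there exists an ordinary line spanned by S, i.e., a line of the plane containing exactly two points of S. -/
/-- A line in the plane `ℝ × ℝ` is a one-dimensional affine subspace
(viewed as a set of points). -/
def IsLine (L : Set (ℝ × ℝ)) : Prop :=
  ∃ ℓ : AffineSubspace ℝ (ℝ × ℝ), Module.finrank ℝ ℓ.direction = 1 ∧ L = (ℓ : Set (ℝ × ℝ))

namespace SG

/-- Cross product of two plane vectors. -/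
def cr (u v : ℝ × ℝ) : ℝ := u.1 * v.2 - u.2 * v.1

/-- Squared norm. -/
def n2 (u : ℝ × ℝ) : ℝ := u.1 ^ 2 + u.2 ^ 2

/-- Squared distance from `x` to the line through `a` and `b`. -/
noncomputable def d2 (x a b : ℝ × ℝ) : ℝ := (cr (b - a) (x - a)) ^ 2 / n2 (b - a)

lemma n2_pos {v : ℝ × ℝ} (hv : v ≠ 0) : 0 < n2 v := by
  have h : v.1 ≠ 0 ∨ v.2 ≠ 0 := by
    by_contra h; push_neg at h; exact hv (Prod.ext h.1 h.2)
  unfold n2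
  rcases h with h | h
  · have h1 : 0 < v.1 ^ 2 := (sq_nonneg _).lt_of_ne (Ne.symm (pow_ne_zero 2 h))
    nlinarith [sq_nonneg v.2]
  · have h1 : 0 < v.2 ^ 2 := (sq_nonneg _).lt_of_ne (Ne.symm (pow_ne_zero 2 h))
    nlinarith [sq_nonneg v.1]

lemma ne_zero_of_cr_left {u v : ℝ × ℝ} (h : cr u v ≠ 0) : u ≠ 0 := by
  rintro rfl; simp [cr] at h

lemma ne_zero_of_cr_right {u v : ℝ × ℝ} (h : cr u v ≠ 0) : v ≠ 0 := by
  rintro rfl; simp [cr] at h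

/-- If the cross product with a nonzero vector vanishes, the vectors are parallel. -/
lemma exists_smul_of_cr_eq_zero {u x : ℝ × ℝ} (hu : u ≠ 0) (h : cr u x = 0) :
    ∃ t : ℝ, x = t • u := by
  have hu' : u.1 ≠ 0 ∨ u.2 ≠ 0 := by
    by_contra h; push_neg at h; exact hu (Prod.ext h.1 h.2)
  rcases hu' with h1 | h1
  · refine ⟨x.1 / u.1, ?_⟩
    have : u.1 * x.2 = u.2 * x.1 := by unfold cr at h; linarith
    ext <;> simp <;> field_simp <;> nlinarith
  · refine ⟨x.2 / u.2, ?_⟩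
    have : u.1 * x.2 = u.2 * x.1 := by unfold cr at h; linarith
    ext <;> simp <;> field_simp <;> nlinarith

/-- Membership in the line through two points, concretely. -/
lemma mem_line_iff {a b c : ℝ × ℝ} :
    c ∈ line[ℝ, a, b] ↔ ∃ t : ℝ, c = a + t • (b - a) := by
  have h := vadd_left_mem_affineSpan_pair (k := ℝ) (p₁ := a) (p₂ := b) (v := c - a)
  simp only [vsub_eq_sub, vadd_eq_add] at h
  rw [show c - a + a = c by abel] at h
  rw [h]
  constructor
  · rintro ⟨r, hr⟩
    exact ⟨r, by rw [hr]; abel⟩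
  · rintro ⟨t, rfl⟩
    exact ⟨t, by rw [add_sub_cancel_left]⟩

/-- The key inequality of Kelly's proof, in algebraic form. If `p = q + w` with `w`
orthogonal to `v`, and `B = q + β • v`, `C = q + γ • v` with `0 ≤ β < γ`, then the
squared distance from `B` to the line through `p` and `C` is less than `n2 w`, and
`B` is not on that line. -/
lemma key_step (q v w : ℝ × ℝ) (β γ : ℝ) (h0 : 0 ≤ β) (hlt : β < γ)
    (horth : v.1 * w.1 + v.2 * w.2 = 0) (hcr : cr v w ≠ 0) :
    cr ((q + γ • v) - (q + w)) ((q + β • v) - (q + w)) ≠ 0 ∧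
      d2 (q + β • v) (q + w) (q + γ • v) < n2 w := by
  have hv : v ≠ 0 := ne_zero_of_cr_left hcr
  have hw : w ≠ 0 := ne_zero_of_cr_right hcr
  have hn : 0 < n2 v := n2_pos hv
  have hm : 0 < n2 w := n2_pos hw
  have hK : cr v w ^ 2 = n2 v * n2 w := by
    have : cr v w ^ 2 + (v.1 * w.1 + v.2 * w.2) ^ 2 = n2 v * n2 w := by
      unfold cr n2; ring
    nlinarith [this]
  have hcross : cr ((q + γ • v) - (q + w)) ((q + β • v) - (q + w)) = (β - γ) * cr v w := by
    unfold cr; simp [Prod.ext_iff]; ring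
  constructor
  · rw [hcross]
    exact mul_ne_zero (by nlinarith) hcr
  · unfold d2
    rw [hcross]
    have hden : n2 ((q + γ • v) - (q + w)) = γ ^ 2 * n2 v + n2 w := by
      unfold n2; simp; nlinarith [horth]
    rw [hden]
    rw [div_lt_iff₀ (by positivity)]
    have h1 : (β - γ) ^ 2 * cr v w ^ 2 = (γ - β) ^ 2 * (n2 v * n2 w) := by
      rw [hK]; ring
    rw [mul_pow, h1]
    have h2 : (γ - β) ^ 2 ≤ γ ^ 2 := by nlinarith
    nlinarith [mul_pos hn hm, sq_nonneg γ]

/-- Distance from `q + w` (with `w ⊥ v`) to the line through two distinct points on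
the line through `q` in direction `v` equals `n2 w`. -/
lemma d2_on_line (q v w : ℝ × ℝ) (α δ : ℝ) (hαδ : α ≠ δ)
    (horth : v.1 * w.1 + v.2 * w.2 = 0) (hv : v ≠ 0) :
    d2 (q + w) (q + α • v) (q + δ • v) = n2 w := by
  have hn : 0 < n2 v := n2_pos hv
  have hK : cr v w ^ 2 = n2 v * n2 w := by
    have : cr v w ^ 2 + (v.1 * w.1 + v.2 * w.2) ^ 2 = n2 v * n2 w := by
      unfold cr n2; ring
    nlinarith [this]
  unfold d2
  have hcross : cr ((q + δ • v) - (q + α • v)) ((q + w) - (q + α • v)) = (δ - α) * cr v w := by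
    unfold cr; simp [Prod.ext_iff]; ring
  have hden : n2 ((q + δ • v) - (q + α • v)) = (δ - α) ^ 2 * n2 v := by
    unfold n2; simp; ring
  rw [hcross, hden, mul_pow, hK]
  have h1 : (δ - α) ^ 2 ≠ 0 := pow_ne_zero _ (sub_ne_zero.2 (Ne.symm hαδ))
  field_simp

/-- Among three distinct reals, two lie on the same (closed) side of 0, in order. -/
lemma two_same_side {s₁ s₂ s₃ : ℝ} (h12 : s₁ ≠ s₂) (h13 : s₁ ≠ s₃) (h23 : s₂ ≠ s₃) :
    ∃ β γ, β ∈ ({s₁, s₂, s₃} : Set ℝ) ∧ γ ∈ ({s₁, s₂, s₃} : Set ℝ) ∧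
      ((0 ≤ β ∧ β < γ) ∨ (γ < β ∧ β ≤ 0)) := by
  by_cases c1 : 0 ≤ s₁ <;> by_cases c2 : 0 ≤ s₂ <;> by_cases c3 : 0 ≤ s₃
  all_goals try push_neg at *
  · rcases lt_or_gt_of_ne h12 with h | h
    · exact ⟨s₁, s₂, by simp, by simp, Or.inl ⟨c1, h⟩⟩
    · exact ⟨s₂, s₁, by simp, by simp, Or.inl ⟨c2, h⟩⟩
  · rcases lt_or_gt_of_ne h12 with h | h
    · exact ⟨s₁, s₂, by simp, by simp, Or.inl ⟨c1, h⟩⟩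
    · exact ⟨s₂, s₁, by simp, by simp, Or.inl ⟨c2, h⟩⟩
  · rcases lt_or_gt_of_ne h13 with h | h
    · exact ⟨s₁, s₃, by simp, by simp, Or.inl ⟨c1, h⟩⟩
    · exact ⟨s₃, s₁, by simp, by simp, Or.inl ⟨c3, h⟩⟩
  · rcases lt_or_gt_of_ne h23 with h | h
    · exact ⟨s₃, s₂, by simp, by simp, Or.inr ⟨h, le_of_lt c3⟩⟩
    · exact ⟨s₂, s₃, by simp, by simp, Or.inr ⟨h, le_of_lt c2⟩⟩
  · rcases lt_or_gt_of_ne h23 with h | h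
    · exact ⟨s₂, s₃, by simp, by simp, Or.inl ⟨c2, h⟩⟩
    · exact ⟨s₃, s₂, by simp, by simp, Or.inl ⟨c3, h⟩⟩
  · rcases lt_or_gt_of_ne h13 with h | h
    · exact ⟨s₃, s₁, by simp, by simp, Or.inr ⟨h, le_of_lt c3⟩⟩
    · exact ⟨s₁, s₃, by simp, by simp, Or.inr ⟨h, le_of_lt c1⟩⟩
  · rcases lt_or_gt_of_ne h12 with h | h
    · exact ⟨s₂, s₁, by simp, by simp, Or.inr ⟨h, le_of_lt c2⟩⟩
    · exact ⟨s₁, s₂, by simp, by simp, Or.inr ⟨h, le_of_lt c1⟩⟩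
  · rcases lt_or_gt_of_ne h12 with h | h
    · exact ⟨s₂, s₁, by simp, by simp, Or.inr ⟨h, le_of_lt c2⟩⟩
    · exact ⟨s₁, s₂, by simp, by simp, Or.inr ⟨h, le_of_lt c1⟩⟩

end SG

open SG in
/-- **Sylvester–Gallai theorem.** If a finite set of points in the plane is not all on
one line, then some line contains exactly two points of the set. -/
theorem sylvester_gallai (S : Set (ℝ × ℝ)) (hfin : S.Finite) (hncol : ¬ Collinear ℝ S) :
    ∃ L : Set (ℝ × ℝ), IsLine L ∧ (S ∩ L).ncard = 2 := by
  classical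
  -- The set of "non-degenerate triples" (p, a, b)
  set T : Set ((ℝ × ℝ) × (ℝ × ℝ) × (ℝ × ℝ)) :=
    {t | t.1 ∈ S ∧ t.2.1 ∈ S ∧ t.2.2 ∈ S ∧ cr (t.2.2 - t.2.1) (t.1 - t.2.1) ≠ 0} with hT
  have hTfin : T.Finite := by
    apply Set.Finite.subset (hfin.prod (hfin.prod hfin))
    rintro ⟨x, y, z⟩ ⟨h1, h2, h3, _⟩
    exact ⟨h1, h2, h3⟩
  have hTne : T.Nonempty := by
    by_contra hTe
    apply hncol
    rw [Set.not_nonempty_iff_eq_empty] at hTe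
    have hall : ∀ p a b : ℝ × ℝ, p ∈ S → a ∈ S → b ∈ S → cr (b - a) (p - a) = 0 := by
      intro p a b hp ha hb
      by_contra h
      have : (p, a, b) ∈ T := ⟨hp, ha, hb, h⟩
      rw [hTe] at this
      exact this
    rcases Set.eq_empty_or_nonempty S with rfl | ⟨a, ha⟩
    · exact collinear_empty ℝ _
    rw [collinear_iff_of_mem ha]
    by_cases hsub : ∀ p ∈ S, p = a
    · exact ⟨0, fun p hp => ⟨0, by simp [hsub p hp]⟩⟩
    push_neg at hsub
    obtain ⟨b, hb, hba⟩ := hsub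
    have hv : b - a ≠ 0 := sub_ne_zero.2 hba
    refine ⟨b - a, fun p hp => ?_⟩
    obtain ⟨t, ht⟩ := exists_smul_of_cr_eq_zero hv (hall p a b hp ha hb)
    exact ⟨t, by rw [vadd_eq_add]; exact eq_add_of_sub_eq ht⟩
  -- pick a minimizing triple
  obtain ⟨⟨p, a, b⟩, hmemT, hmin⟩ :=
    Set.exists_min_image T (fun t => d2 t.1 t.2.1 t.2.2) hTfin hTne
  obtain ⟨v, rfl⟩ : ∃ v : ℝ × ℝ, b = a + v := ⟨b - a, by abel⟩
  obtain ⟨hpS, haS, hbS, hcr⟩ := hmemT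
  have hcr' : cr v (p - a) ≠ 0 := by
    rwa [show a + v - a = v by abel] at hcr
  have hvne : v ≠ 0 := ne_zero_of_cr_left hcr'
  have hab : a ≠ a + v := fun h => hvne (by simpa using h.symm)
  have hnv : 0 < n2 v := n2_pos hvne
  -- the candidate line
  refine ⟨(line[ℝ, a, a + v] : Set (ℝ × ℝ)), ⟨line[ℝ, a, a + v], ?_, rfl⟩, ?_⟩
  · rw [direction_affineSpan, vectorSpan_pair]
    have hne : (a -ᵥ (a + v) : ℝ × ℝ) ≠ 0 := by
      simp only [vsub_eq_sub]
      rw [show a - (a + v) = -v by abel]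
      simpa using hvne
    exact finrank_span_singleton hne
  -- show S ∩ line = {a, a + v}
  have hSL : S ∩ (line[ℝ, a, a + v] : Set (ℝ × ℝ)) = {a, a + v} := by
    apply Set.Subset.antisymm
    · rintro c ⟨hcS, hcL⟩
      by_contra hc
      simp only [Set.mem_insert_iff, Set.mem_singleton_iff, not_or] at hc
      obtain ⟨hca, hcb⟩ := hc
      -- c = a + s • v with s ∉ {0, 1}
      obtain ⟨s, hs⟩ := mem_line_iff.1 hcL
      rw [show a + v - a = v by abel] at hs
      have hs0 : s ≠ 0 := by
        intro h0; exact hca (by rw [hs, h0, zero_smul, add_zero])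
      have hs1 : s ≠ 1 := by
        intro h1; exact hcb (by rw [hs, h1, one_smul])
      -- foot of perpendicular from p
      set t₀ : ℝ := (v.1 * (p - a).1 + v.2 * (p - a).2) / n2 v with ht₀
      set q : ℝ × ℝ := a + t₀ • v with hq
      set w : ℝ × ℝ := p - q with hw
      have hpqw : p = q + w := by rw [hw]; abel
      have horth : v.1 * w.1 + v.2 * w.2 = 0 := by
        have hne : n2 v ≠ 0 := ne_of_gt hnv
        rw [hw, hq, ht₀]
        unfold n2 at hne ⊢
        simp only [Prod.fst_sub, Prod.snd_sub, Prod.fst_add, Prod.snd_add,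
          Prod.smul_fst, Prod.smul_snd, smul_eq_mul]
        field_simp
        ring
      have hcrvw : cr v w ≠ 0 := by
        intro h
        apply hcr'
        have hpa : p - a = w + t₀ • v := by rw [hw, hq]; module
        rw [hpa]
        unfold cr at h ⊢
        simp only [Prod.fst_add, Prod.snd_add, Prod.smul_fst, Prod.smul_snd,
          smul_eq_mul]
        linear_combination h
      -- the three points a, a+v, c relative to q: parameters -t₀, 1-t₀, s-t₀
      have hq_a : a = q + (0 - t₀) • v := by rw [hq]; module
      have hq_b : a + v = q + (1 - t₀) • v := by rw [hq]; module
      have hq_c : c = q + (s - t₀) • v := by rw [hs, hq]; module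
      -- two of them on the same side of the foot
      obtain ⟨β, γ, hβmem, hγmem, hcase⟩ :=
        two_same_side (s₁ := 0 - t₀) (s₂ := 1 - t₀) (s₃ := s - t₀)
          (by intro h; linarith [h])
          (fun h => hs0 (by linarith [sub_left_inj.mp h]))
          (fun h => hs1 (by linarith [sub_left_inj.mp h]))
      have hmemS : ∀ r ∈ ({0 - t₀, 1 - t₀, s - t₀} : Set ℝ), q + r • v ∈ S := by
        rintro r (rfl | rfl | rfl)
        · rw [← hq_a]; exact haS
        · rw [← hq_b]; exact hbS
        · rw [← hq_c]; exact hcS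
      have hβS : q + β • v ∈ S := hmemS _ hβmem
      have hγS : q + γ • v ∈ S := hmemS _ hγmem
      have hpS' : q + w ∈ S := by rw [← hpqw]; exact hpS
      have hd2pab : d2 p a (a + v) = n2 w := by
        have h := d2_on_line q v w (0 - t₀) (1 - t₀) (by intro h; linarith [h]) horth hvne
        rw [← hq_a, ← hq_b] at h
        rw [hpqw]
        exact h
      -- apply the key inequality, flipping the direction in the second case
      rcases hcase with ⟨hβ0, hβγ⟩ | ⟨hγβ, hβ0⟩
      · obtain ⟨hc1, hc2⟩ := key_step q v w β γ hβ0 hβγ horth hcrvw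
        have hle := hmin (q + β • v, q + w, q + γ • v) ⟨hβS, hpS', hγS, hc1⟩
        simp only at hle
        rw [hd2pab] at hle
        linarith
      · have horth' : (-v).1 * w.1 + (-v).2 * w.2 = 0 := by
          simp only [Prod.fst_neg, Prod.snd_neg]; linarith [horth]
        have hcrvw' : cr (-v) w ≠ 0 := by
          intro h
          apply hcrvw
          unfold cr at h ⊢
          simp only [Prod.fst_neg, Prod.snd_neg] at h
          linarith
        have hβv : q + β • v = q + (-β) • (-v) := by module
        have hγv : q + γ • v = q + (-γ) • (-v) := by module
        obtain ⟨hc1, hc2⟩ := key_step q (-v) w (-β) (-γ)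
          (by linarith) (by linarith) horth' hcrvw'
        rw [← hβv, ← hγv] at hc1 hc2
        have hle := hmin (q + β • v, q + w, q + γ • v) ⟨hβS, hpS', hγS, hc1⟩
        simp only at hle
        rw [hd2pab] at hle
        linarith
    · rintro c (rfl | rfl)
      · exact ⟨haS, left_mem_affineSpan_pair _ _ _⟩
      · exact ⟨hbS, right_mem_affineSpan_pair _ _ _⟩
  rw [hSL]
  exact Set.ncard_pair hab
end

section
/- Consider an abstract geometry with a finite point set P of cardinality n in which every line contains at most 3 points, and let each point of P be colored red or blue. Then the number of monochromatic lines (lines all of whose points have the same color) is at least n²/24 − n/6 + t₂/6, where t₂ is the number of lines containing exactly 2 points. -/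
private lemma cast_sq_sub (m : ℕ) : ((m * m - m : ℕ) : ℝ) = (m : ℝ) * m - m := by
  have h : m ≤ m * m := by
    cases m with
    | zero => simp
    | succ k => exact Nat.le_mul_of_pos_left _ (Nat.succ_pos k)
  rw [Nat.cast_sub h]
  push_cast
  ring

/-- **Monochromatic lines in abstract geometries with at most 3 points per line.**
An abstract geometry is given by a finite point set `P` and a collection `L` of lines
(finite sets of points), where every line has at least two points and any two distinct
points lie on a unique line.  If every line has at most `3` points and the points are
`2`-colored, then the number of monochromatic lines is at least
`n²/24 − n/6 + t₂/6`, where `n` is the number of points and `t₂` is the number of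
lines with exactly two points. -/
theorem mono_lines_abstract_geometry {P : Type*} [Fintype P] [DecidableEq P]
    (L : Finset (Finset P))
    (h_two : ∀ l ∈ L, 2 ≤ l.card)
    (h_unique : ∀ p q : P, p ≠ q → ∃! l, l ∈ L ∧ p ∈ l ∧ q ∈ l)
    (h_three : ∀ l ∈ L, l.card ≤ 3)
    (c : P → Bool) :
    (((L.filter (fun l => ∀ p ∈ l, ∀ q ∈ l, c p = c q)).card : ℝ)) ≥
      (Fintype.card P : ℝ) ^ 2 / 24 - (Fintype.card P : ℝ) / 6 +
        ((L.filter (fun l => l.card = 2)).card : ℝ) / 6 := by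
  have hline : ∀ p q : P, p ≠ q → ∃ l, l ∈ L ∧ p ∈ l ∧ q ∈ l ∧
      ∀ l', l' ∈ L → p ∈ l' → q ∈ l' → l' = l := by
    intro p q h
    obtain ⟨l, ⟨hl1, hl2, hl3⟩, hu⟩ := h_unique p q h
    exact ⟨l, hl1, hl2, hl3, fun l' h1 h2 h3 => hu l' ⟨h1, h2, h3⟩⟩
  choose f hfL hfp hfq hfu using hline
  set g : P × P → Finset P := fun pq =>
    if h : pq.1 ≠ pq.2 then f pq.1 pq.2 h else ∅ with hg
  -- fiberwise counting
  have hfib : ∀ (s : Finset P),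
      s.offDiag.card = ∑ l ∈ L, ((s ∩ l).offDiag).card := by
    intro s
    rw [Finset.card_eq_sum_card_fiberwise (f := g) (t := L) ?_]
    · apply Finset.sum_congr rfl
      intro l hl
      congr 1
      ext pq
      simp only [Finset.mem_filter, Finset.mem_offDiag, Finset.mem_inter]
      constructor
      · rintro ⟨⟨h1, h2, hne⟩, hgl⟩
        rw [hg] at hgl
        simp only [dif_pos hne] at hgl
        exact ⟨⟨h1, hgl ▸ hfp _ _ hne⟩, ⟨h2, hgl ▸ hfq _ _ hne⟩, hne⟩
      · rintro ⟨⟨h1, hl1⟩, ⟨h2, hl2⟩, hne⟩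
        refine ⟨⟨h1, h2, hne⟩, ?_⟩
        rw [hg]
        simp only [dif_pos hne]
        exact (hfu _ _ hne l hl hl1 hl2).symm
    · intro pq hpq
      have hne : pq.1 ≠ pq.2 := (Finset.mem_offDiag.mp hpq).2.2
      rw [hg]
      simp only [dif_pos hne]
      exact hfL _ _ hne
  set R : Finset P := Finset.univ.filter (fun p => c p = true) with hR
  set B : Finset P := Finset.univ.filter (fun p => c p = false) with hB
  set n := Fintype.card P with hn
  set M := (L.filter (fun l => ∀ p ∈ l, ∀ q ∈ l, c p = c q)).card with hM
  set t2 := (L.filter (fun l => l.card = 2)).card with ht2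
  set t3 := (L.filter (fun l => l.card = 3)).card with ht3
  -- partition of each line by color
  have hsplit : ∀ l : Finset P, (R ∩ l).card + (B ∩ l).card = l.card := by
    intro l
    have e1 : R ∩ l = l.filter (fun p => c p = true) := by
      ext x; simp [hR, Finset.mem_inter, Finset.mem_filter, and_comm]
    have e2 : B ∩ l = l.filter (fun p => ¬ (c p = true)) := by
      ext x; simp [hB, Finset.mem_inter, Finset.mem_filter, and_comm]
    rw [e1, e2, Finset.card_filter_add_card_filter_not]
  -- total count of ordered pairs
  have htot : n * n - n = 2 * t2 + 6 * t3 := by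
    have h0 := hfib Finset.univ
    rw [Finset.offDiag_card, Finset.card_univ, ← hn] at h0
    have h1 : ∑ l ∈ L, ((Finset.univ ∩ l).offDiag).card
        = ∑ l ∈ L, (l.card * l.card - l.card) := by
      apply Finset.sum_congr rfl
      intro l hl
      rw [Finset.univ_inter, Finset.offDiag_card]
    rw [h1] at h0
    have h2 : ∑ l ∈ L, (l.card * l.card - l.card) = 2 * t2 + 6 * t3 := by
      rw [← Finset.sum_filter_add_sum_filter_not L (fun l => l.card = 2)]
      have e1 : ∑ l ∈ L.filter (fun l => l.card = 2), (l.card * l.card - l.card)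
          = 2 * t2 := by
        have key : ∀ l ∈ L.filter (fun l => l.card = 2), l.card * l.card - l.card = 2 := by
          intro l hl
          rw [(Finset.mem_filter.mp hl).2]
        rw [Finset.sum_congr rfl key, Finset.sum_const, smul_eq_mul, mul_comm]
      have e2 : ∑ l ∈ L.filter (fun l => ¬ l.card = 2), (l.card * l.card - l.card)
          = 6 * t3 := by
        have hc : L.filter (fun l => ¬ l.card = 2) = L.filter (fun l => l.card = 3) := by
          apply Finset.filter_congr
          intro l hl
          have := h_two l hl; have := h_three l hl
          omega
        have key : ∀ l ∈ L.filter (fun l => l.card = 3), l.card * l.card - l.card = 6 := by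
          intro l hl
          rw [(Finset.mem_filter.mp hl).2]
        rw [hc, Finset.sum_congr rfl key, Finset.sum_const, smul_eq_mul, mul_comm]
      rw [e1, e2]
    rw [h2] at h0
    exact h0
  -- the key per-line bound on monochromatic ordered pairs
  have perline : ∀ l ∈ L,
      ((R ∩ l).offDiag).card + ((B ∩ l).offDiag).card ≤
        (if (∀ p ∈ l, ∀ q ∈ l, c p = c q) then 4 else 0) +
          (if l.card = 3 then 2 else 0) := by
    intro l hl
    have hab := hsplit l
    have h2 := h_two l hl
    have h3 := h_three l hl
    rw [Finset.offDiag_card, Finset.offDiag_card]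
    set a := (R ∩ l).card with ha'
    set b := (B ∩ l).card with hb'
    have hab3 : a + b ≤ 3 := by omega
    have ha3 : a ≤ 3 := by omega
    have hb3 : b ≤ 3 := by omega
    by_cases hm : (∀ p ∈ l, ∀ q ∈ l, c p = c q)
    · rw [if_pos hm]
      split_ifs with hc3 <;> interval_cases a <;> interval_cases b <;> omega
    · rw [if_neg hm]
      push_neg at hm
      obtain ⟨p, hp, q, hq, hpq⟩ := hm
      have hcol : (c p = true ∧ c q = false) ∨ (c p = false ∧ c q = true) := by
        cases hcp : c p <;> cases hcq : c q <;> simp_all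
      have ha1 : 1 ≤ a := by
        rcases hcol with ⟨h1, _⟩ | ⟨_, h1⟩
        · refine Finset.card_pos.mpr ⟨p, ?_⟩
          simp [hR, Finset.mem_inter, hp, h1]
        · refine Finset.card_pos.mpr ⟨q, ?_⟩
          simp [hR, Finset.mem_inter, hq, h1]
      have hb1 : 1 ≤ b := by
        rcases hcol with ⟨_, h1⟩ | ⟨h1, _⟩
        · refine Finset.card_pos.mpr ⟨q, ?_⟩
          simp [hB, Finset.mem_inter, hq, h1]
        · refine Finset.card_pos.mpr ⟨p, ?_⟩
          simp [hB, Finset.mem_inter, hp, h1]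
      split_ifs with hc3 <;> interval_cases a <;> interval_cases b <;> omega
  -- summing the per-line bound
  have hsum : (R.offDiag).card + (B.offDiag).card ≤ 4 * M + 2 * t3 := by
    rw [hfib R, hfib B, ← Finset.sum_add_distrib]
    calc ∑ l ∈ L, (((R ∩ l).offDiag).card + ((B ∩ l).offDiag).card)
        ≤ ∑ l ∈ L, ((if (∀ p ∈ l, ∀ q ∈ l, c p = c q) then 4 else 0) +
            (if l.card = 3 then 2 else 0)) := Finset.sum_le_sum perline
      _ = 4 * M + 2 * t3 := by
          rw [Finset.sum_add_distrib, ← Finset.sum_filter, ← Finset.sum_filter,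
            Finset.sum_const, Finset.sum_const, smul_eq_mul, smul_eq_mul,
            mul_comm, mul_comm t3 2]
  have hRBn : R.card + B.card = n := by
    have e2 : B = Finset.univ.filter (fun p => ¬ (c p = true)) := by
      ext x; simp [hB]
    rw [hB, e2] at *
    rw [Finset.card_filter_add_card_filter_not, Finset.card_univ]
  -- pass to the reals
  rw [Finset.offDiag_card, Finset.offDiag_card] at hsum
  set r := R.card with hr
  set bb := B.card with hbb
  have c1 : ((r * r - r : ℕ) : ℝ) + ((bb * bb - bb : ℕ) : ℝ) ≤ 4 * (M : ℝ) + 2 * (t3 : ℝ) := by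
    have := hsum
    push_cast [← Nat.cast_add]
    exact_mod_cast hsum
  rw [cast_sq_sub, cast_sq_sub] at c1
  have c2 : ((n * n - n : ℕ) : ℝ) = 2 * (t2 : ℝ) + 6 * (t3 : ℝ) := by
    exact_mod_cast congrArg (Nat.cast : ℕ → ℝ) htot
  rw [cast_sq_sub] at c2
  have c3 : (r : ℝ) + (bb : ℝ) = n := by exact_mod_cast hRBn
  nlinarith [sq_nonneg ((r : ℝ) - (bb : ℝ)), sq_nonneg ((r : ℝ) + (bb : ℝ))]
end

section
/- Let K ≥ 1 be a real number and let S be a set of n points in the real plane ℝ² such that no line contains more than 3 points of S, with each point colored red or blue. If the number of monochromatic lines of S is at most n²/24 + K·n, then the number of ordinary lines of S (lines containing exactly two points of S) is at most (6K + 1)·n. -/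
/-- The monochromatic lines of a two-colored point set `S`: lines containing at least
two points of `S`, all points of `S` on the line having the same color. -/
def monoLines (S : Set (ℝ × ℝ)) (c : (ℝ × ℝ) → Bool) : Set (Set (ℝ × ℝ)) :=
  {L | IsLine L ∧ 2 ≤ (S ∩ L).ncard ∧ ∀ p ∈ S ∩ L, ∀ q ∈ S ∩ L, c p = c q}

noncomputable section
open Classical

def lineThrough (p q : ℝ × ℝ) : Set (ℝ × ℝ) := (affineSpan ℝ {p, q} : Set (ℝ × ℝ))

lemma mem_lineThrough_left (p q : ℝ × ℝ) : p ∈ lineThrough p q :=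
  subset_affineSpan ℝ _ (by simp)

lemma mem_lineThrough_right (p q : ℝ × ℝ) : q ∈ lineThrough p q :=
  subset_affineSpan ℝ _ (by simp)

lemma isLine_lineThrough {p q : ℝ × ℝ} (h : p ≠ q) : IsLine (lineThrough p q) := by
  refine ⟨affineSpan ℝ {p, q}, ?_, rfl⟩
  rw [direction_affineSpan, vectorSpan_pair]
  exact finrank_span_singleton (by simpa [vsub_eq_sub, sub_eq_zero] using h)

lemma IsLine.eq_lineThrough {L : Set (ℝ × ℝ)} (hL : IsLine L) {p q : ℝ × ℝ}
    (hp : p ∈ L) (hq : q ∈ L) (h : p ≠ q) : L = lineThrough p q := by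
  obtain ⟨ℓ, hdim, rfl⟩ := hL
  have hle : affineSpan ℝ ({p, q} : Set (ℝ × ℝ)) ≤ ℓ := by
    rw [affineSpan_le]; intro x hx
    rcases hx with rfl | hx
    · exact hp
    · simp_all
  have hd : (affineSpan ℝ ({p, q} : Set (ℝ × ℝ))).direction = ℓ.direction := by
    apply Submodule.eq_of_le_of_finrank_le (AffineSubspace.direction_le hle)
    rw [hdim, direction_affineSpan, vectorSpan_pair]
    rw [finrank_span_singleton (by simpa [vsub_eq_sub, sub_eq_zero] using h)]
  have := AffineSubspace.ext_of_direction_eq hd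
    ⟨p, mem_lineThrough_left p q, hp⟩
  rw [← this]; rfl

/-- If a two-colored set of `n` points in the plane with at most `3` points on any
line has at most `n²/24 + K·n` monochromatic lines (`K ≥ 1`), then it has at most
`(6K + 1)·n` ordinary lines (lines with exactly two points of the set). -/
theorem few_mono_lines_implies_few_ordinary_lines (K : ℝ) (hK : 1 ≤ K) (n : ℕ)
    (S : Set (ℝ × ℝ)) (hfin : S.Finite) (hcard : S.ncard = n)
    (h_three : ∀ L : Set (ℝ × ℝ), IsLine L → (S ∩ L).ncard ≤ 3)
    (c : (ℝ × ℝ) → Bool)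
    (h_mono : ((monoLines S c).ncard : ℝ) ≤ (n : ℝ) ^ 2 / 24 + K * n) :
    (({L : Set (ℝ × ℝ) | IsLine L ∧ (S ∩ L).ncard = 2}).ncard : ℝ) ≤ (6 * K + 1) * n := by
  classical
  set F : Finset (ℝ × ℝ) := hfin.toFinset with hFdef
  have hFmem : ∀ x, x ∈ F ↔ x ∈ S := fun x => hfin.mem_toFinset
  have hFcard : F.card = n := by rw [← hcard, Set.ncard_eq_toFinset_card S hfin]
  set FL : Set (ℝ × ℝ) → Finset (ℝ × ℝ) := fun L => F.filter (· ∈ L) with hFLdef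
  have hFLmem : ∀ L x, x ∈ FL L ↔ x ∈ S ∧ x ∈ L := by
    intro L x; simp [hFLdef, Finset.mem_filter, hFmem]
  have hFLcoe : ∀ L, (↑(FL L) : Set (ℝ × ℝ)) = S ∩ L := by
    intro L; ext x; simp [hFLmem]
  have hFLcard : ∀ L, (FL L).card = (S ∩ L).ncard := by
    intro L; rw [← hFLcoe, Set.ncard_coe_finset]
  set φ : (ℝ × ℝ) × (ℝ × ℝ) → Set (ℝ × ℝ) := fun pq => lineThrough pq.1 pq.2 with hφdef
  set 𝓛 : Finset (Set (ℝ × ℝ)) := F.offDiag.image φ with h𝓛def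
  have h𝓛 : ∀ L, L ∈ 𝓛 ↔ IsLine L ∧ 2 ≤ (S ∩ L).ncard := by
    intro L
    constructor
    · intro hL
      obtain ⟨⟨p, q⟩, hpq, rfl⟩ := Finset.mem_image.1 hL
      rw [Finset.mem_offDiag] at hpq
      obtain ⟨hp, hq, hne⟩ := hpq
      refine ⟨isLine_lineThrough hne, ?_⟩
      rw [← hFLcard]
      have hsub : ({p, q} : Finset (ℝ × ℝ)) ⊆ FL (φ (p, q)) := by
        intro x hx
        rcases Finset.mem_insert.1 hx with rfl | hx
        · exact (hFLmem _ x).2 ⟨(hFmem x).1 hp, mem_lineThrough_left _ _⟩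
        · rw [Finset.mem_singleton] at hx; subst hx
          exact (hFLmem _ x).2 ⟨(hFmem x).1 hq, mem_lineThrough_right _ _⟩
      calc 2 = ({p, q} : Finset (ℝ × ℝ)).card := by rw [Finset.card_insert_of_notMem (by simpa using hne), Finset.card_singleton]
        _ ≤ _ := Finset.card_le_card hsub
    · rintro ⟨hL, h2⟩
      obtain ⟨p, hp, q, hq, hne⟩ := (Set.one_lt_ncard (hfin.inter_of_left L)).1 h2
      refine Finset.mem_image.2 ⟨(p, q), Finset.mem_offDiag.2 ⟨(hFmem p).2 hp.1, (hFmem q).2 hq.1, hne⟩, ?_⟩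
      exact (hL.eq_lineThrough hp.2 hq.2 hne).symm
  -- fibers
  have hfiber : ∀ L ∈ 𝓛, F.offDiag.filter (fun pq => φ pq = L) = (FL L).offDiag := by
    intro L hL
    ext ⟨p, q⟩
    rw [Finset.mem_filter, Finset.mem_offDiag, Finset.mem_offDiag]
    constructor
    · rintro ⟨⟨hp, hq, hne⟩, rfl⟩
      exact ⟨(hFLmem _ p).2 ⟨(hFmem p).1 hp, mem_lineThrough_left p q⟩,
        (hFLmem _ q).2 ⟨(hFmem q).1 hq, mem_lineThrough_right p q⟩, hne⟩
    · rintro ⟨hp, hq, hne⟩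
      obtain ⟨hpS, hpL⟩ := (hFLmem _ p).1 hp
      obtain ⟨hqS, hqL⟩ := (hFLmem _ q).1 hq
      refine ⟨⟨(hFmem p).2 hpS, (hFmem q).2 hqS, hne⟩, ?_⟩
      exact (((h𝓛 L).1 hL).1.eq_lineThrough hpL hqL hne).symm
  have hφmem : ∀ pq ∈ F.offDiag, φ pq ∈ 𝓛 := fun pq h => Finset.mem_image_of_mem φ h
  -- total ordered pairs
  have hsum_total : ∑ L ∈ 𝓛, (FL L).offDiag.card = F.offDiag.card := by
    rw [Finset.card_eq_sum_card_fiberwise hφmem]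
    exact Finset.sum_congr rfl fun L hL => by rw [hfiber L hL]
  -- bichromatic ordered pairs
  set Bi : (ℝ × ℝ) × (ℝ × ℝ) → Prop := fun pq => ¬ c pq.1 = c pq.2 with hBidef
  have hsum_bi : ∑ L ∈ 𝓛, ((FL L).offDiag.filter Bi).card = (F.offDiag.filter Bi).card := by
    rw [Finset.card_eq_sum_card_fiberwise (fun pq h => hφmem pq (Finset.mem_filter.1 h).1)]
    refine Finset.sum_congr rfl fun L hL => ?_
    rw [Finset.filter_comm, hfiber L hL]
  -- the mono-line predicate
  set monoP : Set (ℝ × ℝ) → Prop := fun L => ∀ p ∈ S ∩ L, ∀ q ∈ S ∩ L, c p = c q with hmonoPdef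
  -- helper: three points with an odd one out give ≥ 4 bichromatic ordered pairs
  have hfour : ∀ (L : Set (ℝ × ℝ)) (p q r : ℝ × ℝ), p ∈ FL L → q ∈ FL L → r ∈ FL L →
      p ≠ q → p ≠ r → q ≠ r → ¬ c p = c q → ¬ c p = c r →
      4 ≤ ((FL L).offDiag.filter Bi).card := by
    intro L p q r hp hq hr hpq hpr hqr h1 h2
    have hsub : ({(p,q),(q,p),(p,r),(r,p)} : Finset ((ℝ×ℝ)×(ℝ×ℝ))) ⊆ (FL L).offDiag.filter Bi := by
      intro x hx
      simp only [Finset.mem_insert, Finset.mem_singleton] at hx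
      rcases hx with rfl|rfl|rfl|rfl
      · exact Finset.mem_filter.2 ⟨Finset.mem_offDiag.2 ⟨hp, hq, hpq⟩, h1⟩
      · exact Finset.mem_filter.2 ⟨Finset.mem_offDiag.2 ⟨hq, hp, hpq.symm⟩, fun h => h1 h.symm⟩
      · exact Finset.mem_filter.2 ⟨Finset.mem_offDiag.2 ⟨hp, hr, hpr⟩, h2⟩
      · exact Finset.mem_filter.2 ⟨Finset.mem_offDiag.2 ⟨hr, hp, hpr.symm⟩, fun h => h2 h.symm⟩
    calc 4 = ({(p,q),(q,p),(p,r),(r,p)} : Finset ((ℝ×ℝ)×(ℝ×ℝ))).card := by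
          rw [Finset.card_insert_of_notMem (by simp only [Finset.mem_insert, Finset.mem_singleton, Prod.mk.injEq, not_or]; tauto),
              Finset.card_insert_of_notMem (by simp only [Finset.mem_insert, Finset.mem_singleton, Prod.mk.injEq, not_or]; tauto),
              Finset.card_insert_of_notMem (by simp only [Finset.mem_insert, Finset.mem_singleton, Prod.mk.injEq, not_or]; tauto),
              Finset.card_singleton]
      _ ≤ _ := Finset.card_le_card hsub
  -- per-line inequality
  have key : ∀ L ∈ 𝓛,
      2 * (if (S ∩ L).ncard = 2 then 1 else 0) + 2 * (FL L).offDiag.card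
        ≤ 12 * (if monoP L then 1 else 0) + 3 * ((FL L).offDiag.filter Bi).card := by
    intro L hL
    have hk2 : 2 ≤ (FL L).card := by rw [hFLcard]; exact ((h𝓛 L).1 hL).2
    have hk3 : (FL L).card ≤ 3 := by rw [hFLcard]; exact h_three L ((h𝓛 L).1 hL).1
    have hod : (FL L).offDiag.card = (FL L).card * (FL L).card - (FL L).card :=
      Finset.offDiag_card _
    have hk23 : (FL L).card = 2 ∨ (FL L).card = 3 := by omega
    by_cases hm : monoP L
    · rw [if_pos hm]
      have hle12 : 2 * (if (S ∩ L).ncard = 2 then 1 else 0) + 2 * (FL L).offDiag.card ≤ 12 := by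
        rcases hk23 with h2' | h3'
        · rw [hod, h2']; split <;> omega
        · have : (S ∩ L).ncard = 3 := by rw [← hFLcard, h3']
          rw [hod, h3', if_neg (by omega)]
        
      exact hle12.trans (Nat.le_add_right _ _)
    · rw [if_neg hm]
      have hm' : ∃ p ∈ S ∩ L, ∃ q ∈ S ∩ L, ¬ c p = c q := by
        by_contra hcon
        push_neg at hcon
        exact hm hcon
      obtain ⟨p, hpSL, q, hqSL, hcpq⟩ := hm'
      have hpq : p ≠ q := fun h => hcpq (by rw [h])
      have hp : p ∈ FL L := (hFLmem L p).2 hpSL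
      have hq : q ∈ FL L := (hFLmem L q).2 hqSL
      rcases hk23 with h2' | h3'
      · -- two points, bichromatic: at least 2 bi pairs
        have hsub : ({(p,q),(q,p)} : Finset ((ℝ×ℝ)×(ℝ×ℝ))) ⊆ (FL L).offDiag.filter Bi := by
          intro x hx
          simp only [Finset.mem_insert, Finset.mem_singleton] at hx
          rcases hx with rfl|rfl
          · exact Finset.mem_filter.2 ⟨Finset.mem_offDiag.2 ⟨hp, hq, hpq⟩, hcpq⟩
          · exact Finset.mem_filter.2 ⟨Finset.mem_offDiag.2 ⟨hq, hp, hpq.symm⟩, fun h => hcpq h.symm⟩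
        have h2le : 2 ≤ ((FL L).offDiag.filter Bi).card := by
          calc 2 = ({(p,q),(q,p)} : Finset ((ℝ×ℝ)×(ℝ×ℝ))).card := by
                rw [Finset.card_insert_of_notMem (by simp only [Finset.mem_insert, Finset.mem_singleton, Prod.mk.injEq, not_or]; tauto),
                    Finset.card_singleton]
            _ ≤ _ := Finset.card_le_card hsub
        rw [hod, h2']
        split <;> omega
      · -- three points: find the third point r
        have hns : ¬ (FL L ⊆ {p, q}) := by
          intro hsub
          have := Finset.card_le_card hsub
          have : ({p, q} : Finset (ℝ×ℝ)).card ≤ 2 := Finset.card_insert_le _ _ |>.trans (by simp)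
          omega
        obtain ⟨r, hr, hrpq⟩ := Finset.not_subset.1 hns
        simp only [Finset.mem_insert, Finset.mem_singleton, not_or] at hrpq
        obtain ⟨hrp, hrq⟩ := hrpq
        have h4le : 4 ≤ ((FL L).offDiag.filter Bi).card := by
          by_cases hc : c r = c p
          · exact hfour L q p r hq hp hr (Ne.symm hpq) (Ne.symm hrq) (Ne.symm hrp)
              (fun h => hcpq h.symm) (fun h => hcpq (hc ▸ h).symm)
          · exact hfour L p q r hp hq hr hpq (Ne.symm hrp) (Ne.symm hrq)
              hcpq (fun h => hc h.symm)
        have : (S ∩ L).ncard = 3 := by rw [← hFLcard, h3']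
        rw [hod, h3', if_neg (by omega)]
        omega
  -- sum everything
  have master := Finset.sum_le_sum key
  rw [Finset.sum_add_distrib, Finset.sum_add_distrib, ← Finset.mul_sum, ← Finset.mul_sum,
    ← Finset.mul_sum, ← Finset.mul_sum, hsum_total, hsum_bi,
    ← Finset.card_filter, ← Finset.card_filter] at master
  -- identify the ordinary-line set and the mono-line set with Finset filters
  have hordset : {L : Set (ℝ × ℝ) | IsLine L ∧ (S ∩ L).ncard = 2}
      = ↑(𝓛.filter fun L => (S ∩ L).ncard = 2) := by
    ext L
    simp only [Set.mem_setOf_eq, Finset.coe_filter, h𝓛]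
    constructor
    · rintro ⟨h1, h2⟩; exact ⟨⟨h1, by omega⟩, h2⟩
    · rintro ⟨⟨h1, _⟩, h2⟩; exact ⟨h1, h2⟩
  have hmonoset : monoLines S c = ↑(𝓛.filter monoP) := by
    ext L
    simp only [monoLines, Set.mem_setOf_eq, Finset.coe_filter, h𝓛, hmonoPdef]
    tauto
  have ht2 : ({L : Set (ℝ × ℝ) | IsLine L ∧ (S ∩ L).ncard = 2}).ncard
      = (𝓛.filter fun L => (S ∩ L).ncard = 2).card := by
    rw [hordset, Set.ncard_coe_finset]
  have hM : (monoLines S c).ncard = (𝓛.filter monoP).card := by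
    rw [hmonoset, Set.ncard_coe_finset]
  -- the number of bichromatic ordered pairs is 2rb ≤ n²/2... compute it
  set Ft := F.filter (fun p => c p = true) with hFtdef
  set Ff := F.filter (fun p => ¬ c p = true) with hFfdef
  have hrb : Ft.card + Ff.card = n := by
    rw [← hFcard]; exact Finset.card_filter_add_card_filter_not _
  have hBeq : F.offDiag.filter Bi = Ft ×ˢ Ff ∪ Ff ×ˢ Ft := by
    ext ⟨p, q⟩
    simp only [Finset.mem_filter, Finset.mem_offDiag, Finset.mem_union, Finset.mem_product,
      hBidef, hFtdef, hFfdef]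
    have hbool : ∀ a b : Bool, ¬ a = b → (a = true ∧ ¬ b = true) ∨ (¬ a = true ∧ b = true) := by
      decide
    constructor
    · rintro ⟨⟨hp, hq, hne⟩, hbi⟩
      rcases hbool _ _ hbi with ⟨h1, h2⟩ | ⟨h1, h2⟩
      · exact Or.inl ⟨⟨hp, h1⟩, hq, h2⟩
      · exact Or.inr ⟨⟨hp, h1⟩, hq, h2⟩
    · rintro (⟨⟨hp, h1⟩, hq, h2⟩ | ⟨⟨hp, h1⟩, hq, h2⟩)
      · exact ⟨⟨hp, hq, fun hpq => h2 (by rw [← hpq]; exact h1)⟩,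
          fun h => h2 (by rw [← h]; exact h1)⟩
      · exact ⟨⟨hp, hq, fun hpq => h1 (by rw [hpq]; exact h2)⟩,
          fun h => h1 (by rw [h]; exact h2)⟩
  have hBcard : (F.offDiag.filter Bi).card = Ft.card * Ff.card + Ff.card * Ft.card := by
    rw [hBeq, Finset.card_union_of_disjoint, Finset.card_product, Finset.card_product]
    rw [Finset.disjoint_left]
    rintro ⟨p, q⟩ h1 h2
    rw [Finset.mem_product] at h1 h2
    have ht : p ∈ Ft := h1.1
    have hf : p ∈ Ff := h2.1
    rw [hFtdef, Finset.mem_filter] at ht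
    rw [hFfdef, Finset.mem_filter] at hf
    exact hf.2 ht.2
  -- pass to the reals
  have hnn : n ≤ n * n := by nlinarith
  have hoff : F.offDiag.card = n * n - n := by rw [Finset.offDiag_card, hFcard]
  have hoffR : (F.offDiag.card : ℝ) = (n : ℝ) * n - n := by
    rw [hoff, Nat.cast_sub hnn, Nat.cast_mul]
  have masterR : 2 * (({L : Set (ℝ × ℝ) | IsLine L ∧ (S ∩ L).ncard = 2}).ncard : ℝ)
      + 2 * (F.offDiag.card : ℝ)
      ≤ 12 * ((monoLines S c).ncard : ℝ) + 3 * ((F.offDiag.filter Bi).card : ℝ) := by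
    rw [ht2, hM]; exact_mod_cast master
  have hBR : 2 * ((F.offDiag.filter Bi).card : ℝ) ≤ (n : ℝ) * n := by
    rw [hBcard]
    have h1 : ((Ft.card : ℝ) + Ff.card) = n := by exact_mod_cast hrb
    push_cast
    nlinarith [sq_nonneg ((Ft.card : ℝ) - Ff.card)]
  rw [pow_two] at h_mono
  linarith [masterR, hBR, hoffR, h_mono]
end
end

section
/- Let k ≥ 2 be an integer and let S be a set of n points in the real plane ℝ², each colored red or blue, such that no line contains more than k points of S. Let b denote the number of blue points and r the number of red points (so b + r = n). Then the number of monochromatic lines of S is at least (b² − (k−2)·b·r + r² − n) / (k(k−1)). -/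
noncomputable def lineThru (p q : ℝ × ℝ) : Set (ℝ × ℝ) :=
  (affineSpan ℝ ({p, q} : Set (ℝ × ℝ)) : Set (ℝ × ℝ))

lemma finrank_line {p q : ℝ × ℝ} (h : p ≠ q) :
    Module.finrank ℝ (affineSpan ℝ ({p, q} : Set (ℝ × ℝ))).direction = 1 := by
  rw [direction_affineSpan, vectorSpan_pair]
  exact finrank_span_singleton (by simpa [sub_eq_zero] using h)

lemma isLine_lineThru {p q : ℝ × ℝ} (h : p ≠ q) : IsLine (lineThru p q) :=
  ⟨affineSpan ℝ {p, q}, finrank_line h, rfl⟩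

lemma mem_lineThru_left (p q : ℝ × ℝ) : p ∈ lineThru p q :=
  subset_affineSpan ℝ _ (by simp)

lemma mem_lineThru_right (p q : ℝ × ℝ) : q ∈ lineThru p q :=
  subset_affineSpan ℝ _ (by simp)

lemma lineThru_unique {p q : ℝ × ℝ} (h : p ≠ q) {L : Set (ℝ × ℝ)} (hL : IsLine L)
    (hp : p ∈ L) (hq : q ∈ L) : L = lineThru p q := by
  obtain ⟨ℓ, hℓ1, rfl⟩ := hL
  have hle : affineSpan ℝ ({p, q} : Set (ℝ × ℝ)) ≤ ℓ := by
    rw [affineSpan_le]; intro x hx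
    rcases hx with rfl | hx
    · exact hp
    · simp_all
  have hdir : (affineSpan ℝ ({p, q} : Set (ℝ × ℝ))).direction = ℓ.direction := by
    apply Submodule.eq_of_le_of_finrank_le (AffineSubspace.direction_le hle)
    rw [finrank_line h]
    have : Module.finrank ℝ ℓ.direction = 1 := hℓ1
    omega
  have := AffineSubspace.ext_of_direction_eq hdir.symm
    ⟨p, hp, subset_affineSpan ℝ _ (by simp)⟩
  rw [this]; rfl

set_option maxHeartbeats 2000000 in
/-- In a two-colored set of `n` points in the plane with at most `k` points on any
line (`k ≥ 2`), with `b` blue points and `r` red points, the number of monochromatic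
lines is at least `(b² − (k−2)·b·r + r² − n) / (k(k−1))`. -/
theorem mono_lines_at_most_k_per_line (k : ℕ) (hk : 2 ≤ k) (n : ℕ)
    (S : Set (ℝ × ℝ)) (hfin : S.Finite) (hcard : S.ncard = n)
    (c : (ℝ × ℝ) → Bool)
    (h_k : ∀ L : Set (ℝ × ℝ), IsLine L → (S ∩ L).ncard ≤ k)
    (b r : ℕ)
    (hb : b = {p ∈ S | c p = true}.ncard)
    (hr : r = {p ∈ S | c p = false}.ncard) :
    ((monoLines S c).ncard : ℝ) ≥
      ((b : ℝ) ^ 2 - ((k : ℝ) - 2) * b * r + (r : ℝ) ^ 2 - n) / (k * (k - 1)) := by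

  classical
  set F : Finset (ℝ × ℝ) := hfin.toFinset with hF
  have hmemF : ∀ p, p ∈ F ↔ p ∈ S := fun p => hfin.mem_toFinset
  set B : Finset (ℝ × ℝ) := F.filter (fun p => c p = true) with hBdef
  set R : Finset (ℝ × ℝ) := F.filter (fun p => c p = false) with hRdef
  have hBcard : B.card = b := by
    rw [hb]
    have : {p ∈ S | c p = true} = ↑B := by
      ext p; simp [hBdef, hmemF]
    rw [this, Set.ncard_coe_finset]
  have hRcard : R.card = r := by
    rw [hr]
    have : {p ∈ S | c p = false} = ↑R := by
      ext p; simp [hRdef, hmemF]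
    rw [this, Set.ncard_coe_finset]
  have hBR : Disjoint B R := by
    rw [Finset.disjoint_left]
    intro p hp hp'
    simp [hBdef, hRdef] at hp hp'
    rw [hp.2] at hp'; exact absurd hp'.2 (by simp)
  have hBRunion : B ∪ R = F := by
    ext p
    by_cases hc : c p = true <;> simp [hBdef, hRdef, hc]
  have hbrn : b + r = n := by
    rw [← hBcard, ← hRcard, ← Finset.card_union_of_disjoint hBR, hBRunion, ← hcard]
    rw [← Set.ncard_coe_finset F]
    congr 1
    ext p; simp [hmemF]
  -- the pair-to-line map
  set φ : (ℝ × ℝ) × (ℝ × ℝ) → Set (ℝ × ℝ) := fun pq => lineThru pq.1 pq.2 with hφ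
  set P : Finset ((ℝ × ℝ) × (ℝ × ℝ)) := B.offDiag ∪ R.offDiag with hPdef
  set Q : Finset ((ℝ × ℝ) × (ℝ × ℝ)) := B ×ˢ R ∪ R ×ˢ B with hQdef
  set T : Finset (Set (ℝ × ℝ)) := P.image φ with hTdef
  set M : Finset (Set (ℝ × ℝ)) := T.filter (fun L => L ∈ monoLines S c) with hMdef
  -- basic facts about lines through pairs
  have hiff : ∀ L : Set (ℝ × ℝ), IsLine L → ∀ pq : (ℝ × ℝ) × (ℝ × ℝ), pq.1 ≠ pq.2 →
      (φ pq = L ↔ pq.1 ∈ L ∧ pq.2 ∈ L) := by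
    intro L hL pq hne
    constructor
    · rintro rfl
      exact ⟨mem_lineThru_left _ _, mem_lineThru_right _ _⟩
    · rintro ⟨h1, h2⟩
      exact (lineThru_unique hne hL h1 h2).symm
  have hPne : ∀ pq ∈ P, pq.1 ∈ F ∧ pq.2 ∈ F ∧ pq.1 ≠ pq.2 ∧ c pq.1 = c pq.2 := by
    intro pq hpq
    rcases Finset.mem_union.mp hpq with h | h <;>
    · rw [Finset.mem_offDiag] at h
      obtain ⟨h1, h2, h3⟩ := h
      simp [hBdef, hRdef, Finset.mem_filter] at h1 h2
      exact ⟨h1.1, h2.1, h3, by rw [h1.2, h2.2]⟩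
  have hQne : ∀ pq ∈ Q, pq.1 ∈ F ∧ pq.2 ∈ F ∧ pq.1 ≠ pq.2 := by
    intro pq hpq
    rcases Finset.mem_union.mp hpq with h | h <;>
    · rw [Finset.mem_product] at h
      obtain ⟨h1, h2⟩ := h
      simp [hBdef, hRdef, Finset.mem_filter] at h1 h2
      refine ⟨h1.1, h2.1, fun hcon => ?_⟩
      rw [hcon, h2.2] at h1; simp at h1
  have hSL : ∀ L : Set (ℝ × ℝ), S ∩ L = ↑(F.filter (fun p => p ∈ L)) := by
    intro L; ext p; simp [hmemF]
  have hTline : ∀ L ∈ T, IsLine L := by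
    intro L hL
    obtain ⟨pq, hpq, rfl⟩ := Finset.mem_image.mp hL
    exact isLine_lineThru (hPne pq hpq).2.2.1
  have hT2 : ∀ L ∈ T, 2 ≤ (S ∩ L).ncard := by
    intro L hL
    obtain ⟨pq, hpq, rfl⟩ := Finset.mem_image.mp hL
    obtain ⟨h1, h2, h3, -⟩ := hPne pq hpq
    rw [hSL, Set.ncard_coe_finset]
    apply Finset.one_lt_card.mpr
    exact ⟨pq.1, Finset.mem_filter.mpr ⟨h1, mem_lineThru_left _ _⟩, pq.2,
      Finset.mem_filter.mpr ⟨h2, mem_lineThru_right _ _⟩, h3⟩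
  have hPmem : ∀ pq : (ℝ × ℝ) × (ℝ × ℝ), pq ∈ P ↔
      ((pq.1 ∈ B ∧ pq.2 ∈ B) ∨ (pq.1 ∈ R ∧ pq.2 ∈ R)) ∧ pq.1 ≠ pq.2 := by
    intro pq
    simp only [hPdef, Finset.mem_union, Finset.mem_offDiag]
    tauto
  -- monoLines S c coincides with the finset M
  have hMono : monoLines S c = ↑M := by
    ext L
    constructor
    · rintro ⟨hL, h2, hsame⟩
      have h2' : 1 < (F.filter (fun p => p ∈ L)).card := by
        rw [hSL, Set.ncard_coe_finset] at h2; omega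
      obtain ⟨p, hp, q, hq, hne⟩ := Finset.one_lt_card.mp h2'
      rw [Finset.mem_filter] at hp hq
      have hcpq : c p = c q :=
        hsame p ⟨(hmemF p).mp hp.1, hp.2⟩ q ⟨(hmemF q).mp hq.1, hq.2⟩
      have hPpq : (p, q) ∈ P := by
        rw [hPmem]
        refine ⟨?_, hne⟩
        by_cases hcp : c p = true
        · left
          exact ⟨Finset.mem_filter.mpr ⟨hp.1, hcp⟩,
            Finset.mem_filter.mpr ⟨hq.1, by rw [← hcpq]; exact hcp⟩⟩
        · right
          simp only [Bool.not_eq_true] at hcp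
          exact ⟨Finset.mem_filter.mpr ⟨hp.1, hcp⟩,
            Finset.mem_filter.mpr ⟨hq.1, by rw [← hcpq]; exact hcp⟩⟩
      have hφpq : φ (p, q) = L := (hiff L hL (p, q) hne).mpr ⟨hp.2, hq.2⟩
      refine Finset.mem_coe.mpr (Finset.mem_filter.mpr ⟨?_, ⟨hL, h2, hsame⟩⟩)
      exact Finset.mem_image.mpr ⟨(p, q), hPpq, hφpq⟩
    · intro hL
      exact (Finset.mem_filter.mp (Finset.mem_coe.mp hL)).2
  have hMcard : (monoLines S c).ncard = M.card := by
    rw [hMono, Set.ncard_coe_finset]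
  have hQmem : ∀ pq : (ℝ × ℝ) × (ℝ × ℝ), pq ∈ Q ↔
      ((pq.1 ∈ B ∧ pq.2 ∈ R) ∨ (pq.1 ∈ R ∧ pq.2 ∈ B)) := by
    intro pq
    simp only [hQdef, Finset.mem_union, Finset.mem_product]
  have hneBR : ∀ p ∈ B, ∀ q ∈ R, p ≠ q := by
    intro p hp q hq hcon
    exact Finset.disjoint_left.mp hBR hp (hcon ▸ hq)
  have hx : ∀ x : ℕ, x ≤ x * x := by
    intro x
    cases x with
    | zero => simp
    | succ m => exact Nat.le_mul_of_pos_left _ (Nat.succ_pos m)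
  -- the key per-line inequality
  have key : ∀ L ∈ T, 2 * (P.filter (fun pq => φ pq = L)).card ≤
      (if L ∈ monoLines S c then 2 * k * (k - 1) else 0) +
        (k - 2) * (Q.filter (fun pq => φ pq = L)).card := by
    intro L hLT
    have hLine : IsLine L := hTline L hLT
    set BL : Finset (ℝ × ℝ) := B.filter (fun p => p ∈ L) with hBL
    set RL : Finset (ℝ × ℝ) := R.filter (fun p => p ∈ L) with hRL
    have hmemBL : ∀ p, p ∈ BL ↔ p ∈ B ∧ p ∈ L := by
      intro p; rw [hBL, Finset.mem_filter]
    have hmemRL : ∀ p, p ∈ RL ↔ p ∈ R ∧ p ∈ L := by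
      intro p; rw [hRL, Finset.mem_filter]
    -- fiber of same-colored pairs
    have hfibP : P.filter (fun pq => φ pq = L) = BL.offDiag ∪ RL.offDiag := by
      ext pq
      simp only [Finset.mem_filter, hPmem, Finset.mem_union, Finset.mem_offDiag,
        hmemBL, hmemRL]
      constructor
      · rintro ⟨⟨h | h, hne⟩, hφL⟩ <;> [left; right] <;>
          exact ⟨⟨h.1, ((hiff L hLine pq hne).mp hφL).1⟩,
            ⟨h.2, ((hiff L hLine pq hne).mp hφL).2⟩, hne⟩
      · rintro (⟨⟨h1, hl1⟩, ⟨h2, hl2⟩, hne⟩ | ⟨⟨h1, hl1⟩, ⟨h2, hl2⟩, hne⟩)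
        · exact ⟨⟨Or.inl ⟨h1, h2⟩, hne⟩, (hiff L hLine pq hne).mpr ⟨hl1, hl2⟩⟩
        · exact ⟨⟨Or.inr ⟨h1, h2⟩, hne⟩, (hiff L hLine pq hne).mpr ⟨hl1, hl2⟩⟩
    -- fiber of bi-colored pairs
    have hfibQ : Q.filter (fun pq => φ pq = L) = BL ×ˢ RL ∪ RL ×ˢ BL := by
      ext pq
      simp only [Finset.mem_filter, hQmem, Finset.mem_union, Finset.mem_product,
        hmemBL, hmemRL]
      constructor
      · rintro ⟨h | h, hφL⟩ <;> [left; right]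
        · have hne := hneBR _ h.1 _ h.2
          exact ⟨⟨h.1, ((hiff L hLine pq hne).mp hφL).1⟩,
            ⟨h.2, ((hiff L hLine pq hne).mp hφL).2⟩⟩
        · have hne := (hneBR _ h.2 _ h.1).symm
          exact ⟨⟨h.1, ((hiff L hLine pq hne).mp hφL).1⟩,
            ⟨h.2, ((hiff L hLine pq hne).mp hφL).2⟩⟩
      · rintro (⟨⟨h1, hl1⟩, ⟨h2, hl2⟩⟩ | ⟨⟨h1, hl1⟩, ⟨h2, hl2⟩⟩)
        · have hne := hneBR _ h1 _ h2
          exact ⟨Or.inl ⟨h1, h2⟩, (hiff L hLine pq hne).mpr ⟨hl1, hl2⟩⟩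
        · have hne := (hneBR _ h2 _ h1).symm
          exact ⟨Or.inr ⟨h1, h2⟩, (hiff L hLine pq hne).mpr ⟨hl1, hl2⟩⟩
    have hdisjL : Disjoint BL RL := Finset.disjoint_filter_filter hBR
    have hcardP : (P.filter (fun pq => φ pq = L)).card =
        (BL.card * BL.card - BL.card) + (RL.card * RL.card - RL.card) := by
      rw [hfibP, Finset.card_union_of_disjoint, Finset.offDiag_card, Finset.offDiag_card]
      rw [Finset.disjoint_left]
      rintro pq hpq hpq'
      rw [Finset.mem_offDiag] at hpq hpq'
      exact Finset.disjoint_left.mp hdisjL hpq.1 hpq'.1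
    have hcardQ : (Q.filter (fun pq => φ pq = L)).card =
        BL.card * RL.card + RL.card * BL.card := by
      rw [hfibQ, Finset.card_union_of_disjoint, Finset.card_product, Finset.card_product]
      rw [Finset.disjoint_left]
      rintro pq hpq hpq'
      rw [Finset.mem_product] at hpq hpq'
      exact Finset.disjoint_left.mp hdisjL hpq.1 hpq'.1
    have hunionL : BL ∪ RL = F.filter (fun p => p ∈ L) := by
      rw [hBL, hRL, ← Finset.filter_union, hBRunion]
    have hsk : BL.card + RL.card ≤ k := by
      have := h_k L hLine
      rw [hSL, Set.ncard_coe_finset] at this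
      rw [← Finset.card_union_of_disjoint hdisjL, hunionL]
      exact this
    have hsk' : (BL.card : ℤ) + RL.card ≤ (k : ℤ) := by exact_mod_cast hsk
    by_cases hmono : L ∈ monoLines S c
    · rw [if_pos hmono, hcardP]
      refine le_trans ?_ (Nat.le_add_right _ _)
      zify [hx BL.card, hx RL.card, show 1 ≤ k by omega]
      have h1 : (0:ℤ) ≤ ((k:ℤ) - (BL.card + RL.card)) * ((k:ℤ) + (BL.card + RL.card) - 1) := by
        have h2k : (2:ℤ) ≤ (k:ℤ) := by exact_mod_cast hk
        have ha0 : (0:ℤ) ≤ (BL.card:ℤ) := Int.ofNat_nonneg _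
        have hm0 : (0:ℤ) ≤ (RL.card:ℤ) := Int.ofNat_nonneg _
        exact mul_nonneg (by linarith) (by linarith)
      nlinarith [mul_nonneg (Int.ofNat_nonneg BL.card) (Int.ofNat_nonneg RL.card)]
    · rw [if_neg hmono, hcardP, hcardQ]
      have hnsame : ¬ ∀ p ∈ S ∩ L, ∀ q ∈ S ∩ L, c p = c q :=
        fun h => hmono ⟨hLine, hT2 L hLT, h⟩
      push_neg at hnsame
      obtain ⟨p, hp, q, hq, hpq⟩ := hnsame
      rw [hSL, Finset.mem_coe, Finset.mem_filter] at hp hq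
      have hboth : 1 ≤ BL.card ∧ 1 ≤ RL.card := by
        cases hcp : c p with
        | false =>
          have hcq : c q = true := by
            cases hq' : c q
            · exact absurd (by rw [hcp, hq']) hpq
            · rfl
          constructor
          · exact Finset.card_pos.mpr ⟨q, (hmemBL q).mpr
              ⟨Finset.mem_filter.mpr ⟨hq.1, hcq⟩, hq.2⟩⟩
          · exact Finset.card_pos.mpr ⟨p, (hmemRL p).mpr
              ⟨Finset.mem_filter.mpr ⟨hp.1, hcp⟩, hp.2⟩⟩
        | true =>
          have hcq : c q = false := by
            cases hq' : c q
            · rfl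
            · exact absurd (by rw [hcp, hq']) hpq
          constructor
          · exact Finset.card_pos.mpr ⟨p, (hmemBL p).mpr
              ⟨Finset.mem_filter.mpr ⟨hp.1, hcp⟩, hp.2⟩⟩
          · exact Finset.card_pos.mpr ⟨q, (hmemRL q).mpr
              ⟨Finset.mem_filter.mpr ⟨hq.1, hcq⟩, hq.2⟩⟩
      obtain ⟨ha1, hm1⟩ := hboth
      have ha1' : (1:ℤ) ≤ (BL.card : ℤ) := by exact_mod_cast ha1
      have hm1' : (1:ℤ) ≤ (RL.card : ℤ) := by exact_mod_cast hm1
      zify [hx BL.card, hx RL.card, hk]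
      have h1 : (0:ℤ) ≤ ((k:ℤ) - (BL.card + RL.card)) * (BL.card * RL.card) :=
        mul_nonneg (by linarith) (mul_nonneg (Int.ofNat_nonneg _) (Int.ofNat_nonneg _))
      have h2 : (0:ℤ) ≤ ((BL.card:ℤ) - 1) * ((RL.card:ℤ) - 1) * ((BL.card:ℤ) + RL.card) :=
        mul_nonneg (mul_nonneg (by linarith) (by linarith)) (add_nonneg (Int.ofNat_nonneg _) (Int.ofNat_nonneg _))
      nlinarith [h1, h2]
  -- summing the per-line inequality
  have hPsum : P.card = ∑ L ∈ T, (P.filter (fun pq => φ pq = L)).card :=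
    Finset.card_eq_sum_card_fiberwise (fun pq h => Finset.mem_image_of_mem φ h)
  have hQsum : ∑ L ∈ T, (Q.filter (fun pq => φ pq = L)).card ≤ Q.card := by
    have h1 : ∀ L ∈ T, Q.filter (fun pq => φ pq = L) =
        (Q.filter (fun pq => φ pq ∈ T)).filter (fun pq => φ pq = L) := by
      intro L hL
      rw [Finset.filter_filter]
      apply Finset.filter_congr
      intro pq _
      constructor
      · intro h; exact ⟨h ▸ hL, h⟩
      · exact fun h => h.2
    calc ∑ L ∈ T, (Q.filter (fun pq => φ pq = L)).card
        = ∑ L ∈ T, ((Q.filter (fun pq => φ pq ∈ T)).filter (fun pq => φ pq = L)).card :=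
          Finset.sum_congr rfl (fun L hL => by rw [h1 L hL])
      _ = (Q.filter (fun pq => φ pq ∈ T)).card :=
          (Finset.card_eq_sum_card_fiberwise (fun pq h => (Finset.mem_filter.mp h).2)).symm
      _ ≤ Q.card := Finset.card_filter_le _ _
  have hsumite : ∑ L ∈ T, (if L ∈ monoLines S c then 2 * k * (k - 1) else 0) =
      M.card * (2 * k * (k - 1)) := by
    rw [hMdef, ← Finset.sum_filter, Finset.sum_const, smul_eq_mul]
  have main : 2 * P.card ≤ 2 * k * (k - 1) * M.card + (k - 2) * Q.card := by
    calc 2 * P.card = ∑ L ∈ T, 2 * (P.filter (fun pq => φ pq = L)).card := by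
          rw [hPsum, Finset.mul_sum]
      _ ≤ ∑ L ∈ T, ((if L ∈ monoLines S c then 2 * k * (k - 1) else 0) +
            (k - 2) * (Q.filter (fun pq => φ pq = L)).card) := Finset.sum_le_sum key
      _ = M.card * (2 * k * (k - 1)) +
            (k - 2) * ∑ L ∈ T, (Q.filter (fun pq => φ pq = L)).card := by
          rw [Finset.sum_add_distrib, hsumite, Finset.mul_sum]
      _ ≤ 2 * k * (k - 1) * M.card + (k - 2) * Q.card := by
          rw [mul_comm (M.card)]
          exact Nat.add_le_add_left (Nat.mul_le_mul_left _ hQsum) _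
  -- cardinalities of P and Q
  have hPcard : P.card = (b * b - b) + (r * r - r) := by
    rw [hPdef, Finset.card_union_of_disjoint, Finset.offDiag_card, Finset.offDiag_card,
      hBcard, hRcard]
    rw [Finset.disjoint_left]
    rintro pq hpq hpq'
    rw [Finset.mem_offDiag] at hpq hpq'
    exact Finset.disjoint_left.mp hBR hpq.1 hpq'.1
  have hQcard : Q.card = b * r + r * b := by
    rw [hQdef, Finset.card_union_of_disjoint, Finset.card_product, Finset.card_product,
      hBcard, hRcard]
    rw [Finset.disjoint_left]
    rintro pq hpq hpq'
    rw [Finset.mem_product] at hpq hpq'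
    exact Finset.disjoint_left.mp hBR hpq.1 hpq'.1
  rw [hPcard, hQcard] at main
  -- final arithmetic over the reals
  have h2k : (2 : ℝ) ≤ (k : ℝ) := by exact_mod_cast hk
  have hpos : (0 : ℝ) < (k : ℝ) * ((k : ℝ) - 1) := by nlinarith
  rw [hMcard, ge_iff_le, div_le_iff₀ hpos]
  have mainR : ((2 * ((b * b - b) + (r * r - r)) : ℕ) : ℝ) ≤
      ((2 * k * (k - 1) * M.card + (k - 2) * (b * r + r * b) : ℕ) : ℝ) :=
    Nat.cast_le.mpr main
  push_cast [Nat.cast_sub (hx b), Nat.cast_sub (hx r), Nat.cast_sub hk,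
    Nat.cast_sub (show 1 ≤ k by omega)] at mainR
  have hn : (b : ℝ) + (r : ℝ) = (n : ℝ) := by exact_mod_cast hbrn
  nlinarith [mainR, hn]
end

section
/- Let k ≥ 4 be an integer and let c be a real number with 0 < c < 2/(k + √(k² − 4k)), and set C := k·c² − k·c + 1, so that C > 0. Let S be a set of n points in the real plane ℝ², each colored red or blue, such that no line contains more than k points of S, and suppose that one of the two color classes has at most c·n points. Then the number of monochromatic lines of S is at least (C·n² − n)/(k(k−1)). -/
lemma pair_direction {p q : ℝ × ℝ} (h : p ≠ q) :
    Module.finrank ℝ (affineSpan ℝ ({p, q} : Set (ℝ×ℝ))).direction = 1 := by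
  rw [direction_affineSpan, vectorSpan_pair]
  exact finrank_span_singleton (by simpa [sub_eq_zero] using h)

lemma isLine_span {p q : ℝ × ℝ} (h : p ≠ q) :
    IsLine (affineSpan ℝ ({p, q} : Set (ℝ×ℝ)) : Set (ℝ×ℝ)) :=
  ⟨_, pair_direction h, rfl⟩

lemma mem_span_left (p q : ℝ × ℝ) : p ∈ (affineSpan ℝ ({p, q} : Set (ℝ×ℝ)) : Set (ℝ×ℝ)) :=
  subset_affineSpan ℝ _ (by simp)

lemma mem_span_right (p q : ℝ × ℝ) : q ∈ (affineSpan ℝ ({p, q} : Set (ℝ×ℝ)) : Set (ℝ×ℝ)) :=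
  subset_affineSpan ℝ _ (by simp)

lemma line_unique {L : Set (ℝ×ℝ)} (hL : IsLine L) {p q : ℝ×ℝ}
    (hp : p ∈ L) (hq : q ∈ L) (hpq : p ≠ q) :
    L = (affineSpan ℝ ({p, q} : Set (ℝ×ℝ)) : Set (ℝ×ℝ)) := by
  obtain ⟨ℓ, hr, rfl⟩ := hL
  have hsub : affineSpan ℝ ({p, q} : Set (ℝ×ℝ)) ≤ ℓ := by
    rw [affineSpan_le]
    intro x hx
    simp only [Set.mem_insert_iff, Set.mem_singleton_iff] at hx
    rcases hx with rfl | rfl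
    · exact hp
    · exact hq
  have hdir : (affineSpan ℝ ({p, q} : Set (ℝ×ℝ))).direction = ℓ.direction := by
    apply Submodule.eq_of_le_of_finrank_le (AffineSubspace.direction_le hsub)
    rw [hr, pair_direction hpq]
  rw [AffineSubspace.ext_of_direction_eq hdir ⟨p, mem_span_left p q, hp⟩]

lemma nat_sq_sub (m k : ℕ) (h : m ≤ k) : m*m - m ≤ k*k - k := by
  have h1 : m*m - m = m*(m-1) := by rw [Nat.mul_sub, Nat.mul_one]
  have h2 : k*k - k = k*(k-1) := by rw [Nat.mul_sub, Nat.mul_one]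
  rw [h1, h2]
  exact Nat.mul_le_mul h (Nat.sub_le_sub_right h 1)

lemma nat_nonmono (m k a b : ℕ) (hm : m ≤ k) (hab : a + b = m) (ha : 1 ≤ a) (hb : 1 ≤ b) :
    2 * (m*m - m) ≤ k * (a*b + b*a) := by
  have h1 : m*m - m = m*(m-1) := by rw [Nat.mul_sub, Nat.mul_one]
  have h2 : m - 1 ≤ a * b := by
    obtain ⟨a', rfl⟩ := Nat.exists_eq_add_of_le ha
    obtain ⟨b', rfl⟩ := Nat.exists_eq_add_of_le hb
    have he : (1+a') * (1+b') = 1 + a' + b' + a'*b' := by ring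
    omega
  have h3 : m*(m-1) ≤ k*(a*b) := Nat.mul_le_mul hm h2
  calc 2 * (m*m - m) = 2 * (m*(m-1)) := by rw [h1]
    _ ≤ 2 * (k*(a*b)) := Nat.mul_le_mul_left _ h3
    _ = k * (a*b + b*a) := by ring

set_option maxHeartbeats 1000000 in
/-- Let `k ≥ 4`, `0 < c < 2/(k + √(k² − 4k))` and `C := k·c² − k·c + 1`.  Then `C > 0`,
and every two-colored set of `n` points in the plane with at most `k` points on any
line, in which one of the two color classes has at most `c·n` points, has at least
`(C·n² − n)/(k(k−1))` monochromatic lines. -/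
theorem mono_lines_unbalanced_coloring (k : ℕ) (hk : 4 ≤ k)
    (c : ℝ) (hc0 : 0 < c)
    (hc1 : c < 2 / ((k : ℝ) + Real.sqrt ((k : ℝ) ^ 2 - 4 * k)))
    (C : ℝ) (hC : C = (k : ℝ) * c ^ 2 - (k : ℝ) * c + 1)
    (n : ℕ) (S : Set (ℝ × ℝ)) (hfin : S.Finite) (hcard : S.ncard = n)
    (col : (ℝ × ℝ) → Bool)
    (h_k : ∀ L : Set (ℝ × ℝ), IsLine L → (S ∩ L).ncard ≤ k)
    (h_unbal : (({p ∈ S | col p = true}.ncard : ℝ) ≤ c * n) ∨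
               (({p ∈ S | col p = false}.ncard : ℝ) ≤ c * n)) :
    0 < C ∧
      ((monoLines S col).ncard : ℝ) ≥ (C * (n : ℝ) ^ 2 - n) / (k * (k - 1)) := by
  classical
  have hk4 : (4:ℝ) ≤ (k:ℝ) := by exact_mod_cast hk
  set s := Real.sqrt ((k:ℝ)^2 - 4*k) with hs
  have hs0 : 0 ≤ s := Real.sqrt_nonneg _
  have hs2 : s^2 = (k:ℝ)^2 - 4*(k:ℝ) := Real.sq_sqrt (by nlinarith)
  have hks : 0 < (k:ℝ) + s := by nlinarith
  have hcks : c * ((k:ℝ) + s) < 2 := by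
    rw [← lt_div_iff₀ hks]; exact hc1
  have h1 : 0 < (k:ℝ) - s - 2*k*c := by nlinarith
  have h2 : 0 < (k:ℝ) + s - 2*k*c := by nlinarith
  have hCpos : 0 < C := by
    rw [hC]; nlinarith [mul_pos h1 h2]
  refine ⟨hCpos, ?_⟩
  have hchalf : c < 1/2 := by nlinarith
  -- finset setup
  set F := hfin.toFinset with hF
  have hFmem : ∀ x, x ∈ F ↔ x ∈ S := fun x => hfin.mem_toFinset
  have hFn : F.card = n := by
    rw [← hcard, ← hfin.coe_toFinset, Set.ncard_coe_finset]
  set lm : (ℝ×ℝ)×(ℝ×ℝ) → Set (ℝ×ℝ) :=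
    fun pq => (affineSpan ℝ ({pq.1, pq.2} : Set (ℝ×ℝ)) : Set (ℝ×ℝ)) with hlm
  set D := F.offDiag with hD
  set Lines := D.image lm with hLines
  set G : Set (ℝ×ℝ) → Finset (ℝ×ℝ) := fun L => F.filter (· ∈ L) with hG
  have hSL : ∀ L : Set (ℝ×ℝ), S ∩ L = ↑(G L) := by
    intro L; ext x
    simp only [hG, Finset.coe_filter, Set.mem_setOf_eq, Set.mem_inter_iff, hFmem]
  have hGcard : ∀ L, (S ∩ L).ncard = (G L).card := by
    intro L; rw [hSL, Set.ncard_coe_finset]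
  have hGmem : ∀ L x, x ∈ G L ↔ x ∈ S ∧ x ∈ L := by
    intro L x; simp only [hG, Finset.mem_filter, hFmem]
  have hLine_of_mem : ∀ L ∈ Lines, IsLine L := by
    intro L hL
    obtain ⟨pq, hpq, rfl⟩ := Finset.mem_image.1 hL
    exact isLine_span (Finset.mem_offDiag.1 hpq).2.2
  have hfiber : ∀ L ∈ Lines, D.filter (fun pq => lm pq = L) = (G L).offDiag := by
    intro L hL
    ext ⟨p, q⟩
    simp only [Finset.mem_filter, Finset.mem_offDiag, hD, hG, hFmem]
    constructor
    · rintro ⟨⟨hp, hq, hne⟩, hEq⟩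
      refine ⟨⟨hp, ?_⟩, ⟨hq, ?_⟩, hne⟩
      · rw [← hEq]; exact mem_span_left p q
      · rw [← hEq]; exact mem_span_right p q
    · rintro ⟨⟨hp, hpL⟩, ⟨hq, hqL⟩, hne⟩
      exact ⟨⟨hp, hq, hne⟩, (line_unique (hLine_of_mem L hL) hpL hqL hne).symm⟩
  have hmk : ∀ L ∈ Lines, (G L).card ≤ k := by
    intro L hL
    rw [← hGcard]; exact h_k L (hLine_of_mem L hL)
  -- total count
  have htotal : n*n - n = ∑ L ∈ Lines, ((G L).card * (G L).card - (G L).card) := by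
    have h0 : D.card = ∑ L ∈ Lines, (D.filter (fun pq => lm pq = L)).card :=
      Finset.card_eq_sum_card_fiberwise (fun pq hpq => Finset.mem_image_of_mem _ hpq)
    have h1' : D.card = n*n - n := by rw [hD, Finset.offDiag_card, hFn]
    rw [← h1', h0]
    exact Finset.sum_congr rfl fun L hL => by rw [hfiber L hL, Finset.offDiag_card]
  set P : Set (ℝ×ℝ) → Prop := fun L => ∀ p ∈ G L, ∀ q ∈ G L, col p = col q with hP
  set Mono := Lines.filter P with hMono
  set NM := Lines.filter (fun L => ¬ P L) with hNM
  have hsplit : ∑ L ∈ Lines, ((G L).card * (G L).card - (G L).card)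
      = ∑ L ∈ Mono, ((G L).card * (G L).card - (G L).card)
        + ∑ L ∈ NM, ((G L).card * (G L).card - (G L).card) :=
    (Finset.sum_filter_add_sum_filter_not Lines P _).symm
  have hmonoBound : ∑ L ∈ Mono, ((G L).card * (G L).card - (G L).card)
      ≤ Mono.card * (k*k - k) := by
    calc ∑ L ∈ Mono, ((G L).card * (G L).card - (G L).card)
        ≤ ∑ _L ∈ Mono, (k*k - k) := by
          apply Finset.sum_le_sum
          intro L hL
          exact nat_sq_sub _ _ (hmk L (Finset.mem_filter.1 hL).1)
      _ = Mono.card * (k*k - k) := by rw [Finset.sum_const, smul_eq_mul]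
  -- bichromatic counting
  set Q : (ℝ×ℝ)×(ℝ×ℝ) → Prop := fun pq => col pq.1 ≠ col pq.2 with hQ
  set r := (F.filter (fun p => col p = true)).card with hr
  set b := (F.filter (fun p => ¬ col p = true)).card with hb
  have hrbn : r + b = n := by
    rw [hr, hb, Finset.card_filter_add_card_filter_not, hFn]
  -- per-line bichromatic split
  have hlinesplit : ∀ L, (G L).offDiag.filter Q =
      ((G L).filter (fun p => col p = true)) ×ˢ ((G L).filter (fun p => ¬ col p = true))
      ∪ ((G L).filter (fun p => ¬ col p = true)) ×ˢ ((G L).filter (fun p => col p = true)) := by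
    intro L
    ext ⟨p, q⟩
    simp only [Finset.mem_filter, Finset.mem_offDiag, Finset.mem_union, Finset.mem_product, hQ]
    constructor
    · rintro ⟨⟨hp, hq, hne⟩, hcol⟩
      by_cases hcp : col p = true
      · have hcq : ¬ col q = true := fun h => hcol (by rw [hcp, h])
        exact Or.inl ⟨⟨hp, hcp⟩, hq, hcq⟩
      · have hcq : col q = true := by revert hcol hcp; cases col p <;> cases col q <;> simp
        exact Or.inr ⟨⟨hp, hcp⟩, hq, hcq⟩
    · rintro (⟨⟨hp, h1'⟩, hq, h2'⟩ | ⟨⟨hp, h1'⟩, hq, h2'⟩)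
      · exact ⟨⟨hp, hq, fun h => h2' (by rw [← h]; exact h1')⟩,
          fun h => h2' (by rw [← h]; exact h1')⟩
      · exact ⟨⟨hp, hq, fun h => h1' (by rw [h]; exact h2')⟩,
          fun h => h1' (h.trans h2')⟩
  have hNMbound : ∀ L ∈ NM, 2 * ((G L).card * (G L).card - (G L).card)
      ≤ k * ((G L).offDiag.filter Q).card := by
    intro L hL
    obtain ⟨hLmem, hnP⟩ := Finset.mem_filter.1 hL
    set a1 := ((G L).filter (fun p => col p = true)).card with ha1
    set b1 := ((G L).filter (fun p => ¬ col p = true)).card with hb1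
    have hab : a1 + b1 = (G L).card := by
      rw [ha1, hb1, Finset.card_filter_add_card_filter_not]
    have hcardQ : ((G L).offDiag.filter Q).card = a1*b1 + b1*a1 := by
      rw [hlinesplit L, Finset.card_union_of_disjoint, Finset.card_product,
        Finset.card_product]
      rw [Finset.disjoint_left]
      rintro ⟨p, q⟩ hmem hmem'
      simp only [Finset.mem_product, Finset.mem_filter] at hmem hmem'
      exact hmem'.1.2 hmem.1.2
    -- a1, b1 ≥ 1
    simp only [hP] at hnP
    push_neg at hnP
    obtain ⟨p, hp, q, hq, hpq⟩ := hnP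
    have ha1' : 1 ≤ a1 ∧ 1 ≤ b1 := by
      constructor <;> rw [Nat.one_le_iff_ne_zero, ← Nat.pos_iff_ne_zero, Finset.card_pos]
      · cases hcp : col p
        · cases hcq : col q
          · exact absurd rfl (hcp ▸ hcq ▸ hpq)
          · exact ⟨q, Finset.mem_filter.2 ⟨hq, hcq⟩⟩
        · exact ⟨p, Finset.mem_filter.2 ⟨hp, hcp⟩⟩
      · cases hcp : col p
        · exact ⟨p, Finset.mem_filter.2 ⟨hp, by simp [hcp]⟩⟩
        · cases hcq : col q
          · exact ⟨q, Finset.mem_filter.2 ⟨hq, by simp [hcq]⟩⟩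
          · exact absurd rfl (hcp ▸ hcq ▸ hpq)
    rw [hcardQ]
    exact nat_nonmono _ _ _ _ (hmk L hLmem) hab ha1'.1 ha1'.2
  -- sum of bichromatic pairs over lines
  set Bich := D.filter Q with hBich
  have hBichSum : ∑ L ∈ Lines, ((G L).offDiag.filter Q).card = Bich.card := by
    have h0 : Bich.card = ∑ L ∈ Lines, (Bich.filter (fun pq => lm pq = L)).card :=
      Finset.card_eq_sum_card_fiberwise (fun pq hpq =>
        Finset.mem_image_of_mem _ (Finset.mem_filter.1 hpq).1)
    rw [h0]
    apply Finset.sum_congr rfl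
    intro L hL
    rw [hBich, Finset.filter_comm, hfiber L hL]
  have hBichCard : Bich.card ≤ r*b + b*r := by
    have hsub : Bich ⊆
        (F.filter (fun p => col p = true)) ×ˢ (F.filter (fun p => ¬ col p = true))
        ∪ (F.filter (fun p => ¬ col p = true)) ×ˢ (F.filter (fun p => col p = true)) := by
      rintro ⟨p, q⟩ hmem
      simp only [hBich, hD, Finset.mem_filter, Finset.mem_offDiag, hQ] at hmem
      obtain ⟨⟨hp, hq, hne⟩, hcol⟩ := hmem
      simp only [Finset.mem_union, Finset.mem_product, Finset.mem_filter]
      by_cases hcp : col p = true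
      · have hcq : ¬ col q = true := fun h => hcol (by rw [hcp, h])
        exact Or.inl ⟨⟨hp, hcp⟩, hq, hcq⟩
      · have hcq : col q = true := by revert hcol hcp; cases col p <;> cases col q <;> simp
        exact Or.inr ⟨⟨hp, hcp⟩, hq, hcq⟩
    calc Bich.card ≤ _ := Finset.card_le_card hsub
      _ ≤ r*b + b*r := by
        apply le_trans (Finset.card_union_le _ _)
        rw [Finset.card_product, Finset.card_product, hr, hb]
  have hNMtotal : ∑ L ∈ NM, ((G L).card * (G L).card - (G L).card) ≤ k * (r * b) := by
    have h2' : 2 * ∑ L ∈ NM, ((G L).card * (G L).card - (G L).card)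
        ≤ 2 * (k * (r*b)) := by
      rw [Finset.mul_sum]
      calc ∑ L ∈ NM, 2 * ((G L).card * (G L).card - (G L).card)
          ≤ ∑ L ∈ NM, k * ((G L).offDiag.filter Q).card :=
            Finset.sum_le_sum hNMbound
        _ = k * ∑ L ∈ NM, ((G L).offDiag.filter Q).card := by rw [Finset.mul_sum]
        _ ≤ k * ∑ L ∈ Lines, ((G L).offDiag.filter Q).card := by
            apply Nat.mul_le_mul_left
            exact Finset.sum_le_sum_of_subset (Finset.filter_subset _ _)
        _ = k * Bich.card := by rw [hBichSum]
        _ ≤ k * (r*b + b*r) := Nat.mul_le_mul_left _ hBichCard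
        _ = 2 * (k * (r*b)) := by ring
    omega
  have key : n*n - n ≤ Mono.card * (k*k - k) + k * (r * b) := by
    rw [htotal, hsplit]
    omega
  -- identify monoLines with Mono
  have hML : monoLines S col = ↑Mono := by
    ext L
    simp only [monoLines, Set.mem_setOf_eq, Finset.coe_filter, hMono]
    constructor
    · rintro ⟨hIsL, h2', hmono⟩
      rw [hGcard] at h2'
      obtain ⟨p, hp, q, hq, hne⟩ := Finset.one_lt_card.1 h2'
      have hpSL := (hGmem L p).1 hp
      have hqSL := (hGmem L q).1 hq
      have hLeq : L = lm (p, q) := line_unique hIsL hpSL.2 hqSL.2 hne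
      have hLmem : L ∈ Lines := Finset.mem_image.2
        ⟨(p, q), Finset.mem_offDiag.2 ⟨(hFmem p).2 hpSL.1, (hFmem q).2 hqSL.1, hne⟩, hLeq.symm⟩
      refine ⟨hLmem, ?_⟩
      intro x hx y hy
      exact hmono x (by rw [hSL]; exact hx) y (by rw [hSL]; exact hy)
    · rintro ⟨hLmem, hPL⟩
      refine ⟨hLine_of_mem L hLmem, ?_, ?_⟩
      · obtain ⟨⟨p, q⟩, hpq, hLeq⟩ := Finset.mem_image.1 hLmem
        obtain ⟨hp, hq, hne⟩ := Finset.mem_offDiag.1 hpq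
        rw [hGcard]
        apply Finset.one_lt_card.2
        refine ⟨p, ?_, q, ?_, hne⟩
        · exact (hGmem L p).2 ⟨(hFmem p).1 hp, by rw [← hLeq]; exact mem_span_left p q⟩
        · exact (hGmem L q).2 ⟨(hFmem q).1 hq, by rw [← hLeq]; exact mem_span_right p q⟩
      · intro x hx y hy
        exact hPL x (by rwa [← Finset.mem_coe, ← hSL]) y (by rwa [← Finset.mem_coe, ← hSL])
  -- cardinalities of color classes
  have hrS : ({p ∈ S | col p = true}).ncard = r := by
    rw [hr, ← Set.ncard_coe_finset]
    congr 1
    ext x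
    simp only [Finset.coe_filter, Set.mem_setOf_eq, hFmem]
  have hbS : ({p ∈ S | col p = false}).ncard = b := by
    rw [hb, ← Set.ncard_coe_finset]
    congr 1
    ext x
    simp only [Finset.coe_filter, Set.mem_setOf_eq, hFmem, Bool.not_eq_true]
  -- real arithmetic
  have hrb : (r:ℝ) * (b:ℝ) ≤ c * (1-c) * (n:ℝ)^2 := by
    have hsum : (r:ℝ) + (b:ℝ) = (n:ℝ) := by exact_mod_cast hrbn
    have hn0 : (0:ℝ) ≤ n := Nat.cast_nonneg n
    have hr0 : (0:ℝ) ≤ r := Nat.cast_nonneg r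
    have hb0 : (0:ℝ) ≤ b := Nat.cast_nonneg b
    have hcn : c * n ≤ n / 2 := by nlinarith
    rcases h_unbal with hx | hx
    · rw [hrS] at hx
      nlinarith [mul_nonneg (sub_nonneg.2 hx) (show (0:ℝ) ≤ n - c*n - r by linarith)]
    · rw [hbS] at hx
      nlinarith [mul_nonneg (sub_nonneg.2 hx) (show (0:ℝ) ≤ n - c*n - b by linarith)]
  have hMcard : ((monoLines S col).ncard : ℝ) = (Mono.card : ℝ) := by
    rw [hML, Set.ncard_coe_finset]
  have hkey : ((n:ℝ)*n - n) ≤ (Mono.card:ℝ) * ((k:ℝ)*k - k) + (k:ℝ) * (r * b) := by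
    have hnn : n ≤ n*n := by nlinarith
    have hkk : k ≤ k*k := by nlinarith
    have := key
    have hcast : ((n*n - n : ℕ) : ℝ) ≤ ((Mono.card * (k*k - k) + k * (r * b) : ℕ) : ℝ) := by
      exact_mod_cast this
    push_cast [Nat.cast_sub hnn, Nat.cast_sub hkk] at hcast
    convert hcast using 2 <;> push_cast <;> ring
  have hKpos : 0 < (k:ℝ) * ((k:ℝ) - 1) := by nlinarith
  rw [ge_iff_le, div_le_iff₀ hKpos, hMcard]
  have hk0 : (0:ℝ) ≤ k := by linarith
  nlinarith [mul_le_mul_of_nonneg_left hrb hk0]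
end

section
/- Let 0 < p < 1, define f(x) = p^x + (1−p)^x, and let n ≥ 10 be an integer. Then 3·f(2) − 2·f(3) + (n(n+3)/9)·f(3) ≥ (n−1)·f(2) + f(n−1); that is, 3(p²+(1−p)²) − 2(p³+(1−p)³) + (n(n+3)/9)(p³+(1−p)³) ≥ (n−1)(p²+(1−p)²) + p^{n−1} + (1−p)^{n−1}. -/
/-- For `0 < p < 1`, `f(x) = p^x + (1−p)^x`, and every integer `n ≥ 10`, one has
`3·f(2) − 2·f(3) + (n(n+3)/9)·f(3) ≥ (n−1)·f(2) + f(n−1)`. -/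
theorem melchior_langer_combination_inequality (p : ℝ) (hp0 : 0 < p) (hp1 : p < 1)
    (n : ℕ) (hn : 10 ≤ n) :
    3 * (p ^ 2 + (1 - p) ^ 2) - 2 * (p ^ 3 + (1 - p) ^ 3) +
        ((n : ℝ) * ((n : ℝ) + 3) / 9) * (p ^ 3 + (1 - p) ^ 3) ≥
      ((n : ℝ) - 1) * (p ^ 2 + (1 - p) ^ 2) + (p ^ (n - 1) + (1 - p) ^ (n - 1)) := by
  have hq0 : 0 < 1 - p := by linarith
  have hm : (10 : ℝ) ≤ (n : ℝ) := by exact_mod_cast hn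
  have h5 : 5 ≤ n - 1 := by omega
  have hp5 : p ^ (n - 1) ≤ p ^ 5 :=
    pow_le_pow_of_le_one hp0.le hp1.le h5
  have hq5 : (1 - p) ^ (n - 1) ≤ (1 - p) ^ 5 :=
    pow_le_pow_of_le_one hq0.le (by linarith) h5
  set t : ℝ := p * (1 - p) with ht_def
  have ht0 : 0 < t := mul_pos hp0 hq0
  have ht : t ≤ 1 / 4 := by nlinarith [sq_nonneg (2 * p - 1)]
  set m : ℝ := (n : ℝ) with hm_def
  have e2 : p ^ 2 + (1 - p) ^ 2 = 1 - 2 * t := by rw [ht_def]; ring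
  have e3 : p ^ 3 + (1 - p) ^ 3 = 1 - 3 * t := by rw [ht_def]; ring
  have e5 : p ^ 5 + (1 - p) ^ 5 = 1 - 5 * t + 5 * t ^ 2 := by rw [ht_def]; ring
  have key : 3 * (1 - 2 * t) - 2 * (1 - 3 * t) + (m * (m + 3) / 9) * (1 - 3 * t) ≥
      (m - 1) * (1 - 2 * t) + (1 - 5 * t + 5 * t ^ 2) := by
    nlinarith [mul_nonneg (by linarith : (0:ℝ) ≤ 1/4 - t)
        (by nlinarith : (0:ℝ) ≤ 12 * m ^ 2 - 36 * m - 63 + 180 * t),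
      mul_nonneg (by linarith : (0:ℝ) ≤ m - 10) (by linarith : (0:ℝ) ≤ m - 5)]
  calc 3 * (p ^ 2 + (1 - p) ^ 2) - 2 * (p ^ 3 + (1 - p) ^ 3) +
        (m * (m + 3) / 9) * (p ^ 3 + (1 - p) ^ 3)
      ≥ (m - 1) * (p ^ 2 + (1 - p) ^ 2) + (p ^ 5 + (1 - p) ^ 5) := by
        rw [e2, e3, e5]; exact key
    _ ≥ (m - 1) * (p ^ 2 + (1 - p) ^ 2) + (p ^ (n - 1) + (1 - p) ^ (n - 1)) := by
        linarith
end

section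
/- Let m ≥ 3 be an odd integer. On the ellipse x² + 4y² = 1 in ℝ², let B be the set of m blue points (cos(2πk/m − π/4), 2·sin(2πk/m − π/4)) for k = 0, 1, …, m−1, and let R be the set of m red points (cos(2πk/m + 3π/4), 2·sin(2πk/m + 3π/4)) for k = 0, 1, …, m−1. Then B and R are disjoint, and there is no monochromatic circle for the colored point set B ∪ R: there is no circle in ℝ² that contains at least three points of B ∪ R such that all points of B ∪ R lying on it have the same color. -/
/-- The point of the Euclidean plane with coordinates `(x, y)`. -/
noncomputable def planePt (x y : ℝ) : EuclideanSpace ℝ (Fin 2) :=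
  (WithLp.equiv 2 (Fin 2 → ℝ)).symm ![x, y]

lemma planePt_inj {x y x' y' : ℝ} (h : planePt x y = planePt x' y') : x = x' ∧ y = y' := by
  constructor
  · have := congrFun (congrArg (WithLp.equiv 2 (Fin 2 → ℝ)) h) 0
    simpa [planePt] using this
  · have := congrFun (congrArg (WithLp.equiv 2 (Fin 2 → ℝ)) h) 1
    simpa [planePt] using this


lemma planePt_zero (x y : ℝ) : planePt x y 0 = x := rfl
lemma planePt_one (x y : ℝ) : planePt x y 1 = y := rfl
lemma dist_planePt (x y : ℝ) (o : EuclideanSpace ℝ (Fin 2)) :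
    dist (planePt x y) o = Real.sqrt ((x - o 0)^2 + (y - o 1)^2) := by
  rw [EuclideanSpace.dist_eq, Fin.sum_univ_two, Real.dist_eq, Real.dist_eq, sq_abs, sq_abs,
    planePt_zero, planePt_one]
lemma mem_sphere_planePt {x y : ℝ} {o : EuclideanSpace ℝ (Fin 2)} {ρ : ℝ} (hρ : 0 < ρ) :
    planePt x y ∈ Metric.sphere o ρ ↔ (x - o 0)^2 + (y - o 1)^2 = ρ^2 := by
  rw [Metric.mem_sphere, dist_planePt, ← Real.sqrt_sq hρ.le,
    Real.sqrt_inj (by positivity) (sq_nonneg ρ), Real.sqrt_sq hρ.le]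

lemma sphere_quartic (o : EuclideanSpace ℝ (Fin 2)) (ρ : ℝ) (hρ : 0 < ρ) :
    ∃ c1 c2 c3 : ℂ, ∀ θ : ℝ,
      (planePt (Real.cos θ) (2 * Real.sin θ) ∈ Metric.sphere o ρ ↔
        (Complex.exp (θ * Complex.I))^4 + c3 * (Complex.exp (θ * Complex.I))^3
          + c2 * (Complex.exp (θ * Complex.I))^2 + c1 * (Complex.exp (θ * Complex.I)) + 1 = 0) := by
  set a := o 0 with ha
  set b := o 1 with hb
  refine ⟨4*(a:ℂ)/3 + 8*(b:ℂ)/3*Complex.I,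
    -(10/3) - (4/3)*((a:ℂ)^2 + (b:ℂ)^2 - (ρ:ℂ)^2),
    4*(a:ℂ)/3 - 8*(b:ℂ)/3*Complex.I, fun θ => ?_⟩
  have hz : Complex.exp ((θ:ℂ) * Complex.I)
      = (Real.cos θ : ℂ) + (Real.sin θ : ℂ) * Complex.I := by
    rw [Complex.exp_mul_I, Complex.ofReal_cos, Complex.ofReal_sin]
  have hzne : ((Real.cos θ : ℂ) + (Real.sin θ : ℂ) * Complex.I) ≠ 0 := by
    rw [← hz]; exact Complex.exp_ne_zero _
  have hcs : (Real.cos θ : ℂ)^2 + (Real.sin θ : ℂ)^2 = 1 := by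
    have := Real.cos_sq_add_sin_sq θ
    exact_mod_cast congrArg (Complex.ofReal) this
  rw [mem_sphere_planePt hρ, ← ha, ← hb, hz]
  set c : ℂ := (Real.cos θ : ℂ)
  set s : ℂ := (Real.sin θ : ℂ)
  have hco : ((Real.cos θ - a)^2 + (2*Real.sin θ - b)^2 = ρ^2) ↔
      ((c - a)^2 + (2*s - b)^2 - (ρ:ℂ)^2 = 0) := by
    rw [sub_eq_zero, ← Complex.ofReal_inj]
    simp only [Complex.ofReal_add, Complex.ofReal_sub, Complex.ofReal_pow, Complex.ofReal_mul,
      Complex.ofReal_ofNat]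
    exact Iff.rfl
  rw [hco]
  have hkey : (c + s * Complex.I)^4
      + (4*(a:ℂ)/3 - 8*(b:ℂ)/3*Complex.I) * (c + s * Complex.I)^3
      + (-(10/3) - (4/3)*((a:ℂ)^2 + (b:ℂ)^2 - (ρ:ℂ)^2)) * (c + s * Complex.I)^2
      + (4*(a:ℂ)/3 + 8*(b:ℂ)/3*Complex.I) * (c + s * Complex.I) + 1
      = (-4/3) * (c + s * Complex.I)^2 * ((c - a)^2 + (2*s - b)^2 - (ρ:ℂ)^2) := by
    linear_combination
      (-1 + (8/3)*s*b - (4/3)*s*Complex.I*a - (13/3)*s^2 - (4/3)*c*a - (8/3)*c*Complex.I*b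
        + (20/3)*c*s*Complex.I + (7/3)*c^2) * hcs
      + ((8/3)*s*b - (10/3)*s^2 - (8/3)*s^3*b + (4/3)*s^3*Complex.I*a - (8/3)*s^3*Complex.I^2*b
        + (13/3)*s^4 + s^4*Complex.I^2 + (4/3)*c*s^2*a - 8*c*s^2*Complex.I*b + 4*c*s^3*Complex.I
        - 8*c^2*s*b + (22/3)*c^2*s^2) * Complex.I_sq
  rw [hkey]
  constructor
  · intro h
    rw [h]; ring
  · intro h
    rcases mul_eq_zero.mp h with h' | h'
    · rcases mul_eq_zero.mp h' with h'' | h''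
      · norm_num at h''
      · exact absurd (pow_eq_zero_iff (two_ne_zero) |>.mp h'') hzne
    · exact h'

lemma quad_zero {a b c z1 z2 z3 : ℂ} (h12 : z1 ≠ z2) (h13 : z1 ≠ z3) (h23 : z2 ≠ z3)
    (e1 : a*z1^2 + b*z1 + c = 0) (e2 : a*z2^2 + b*z2 + c = 0) (e3 : a*z3^2 + b*z3 + c = 0) :
    a = 0 ∧ b = 0 ∧ c = 0 := by
  have d12 : a*(z1+z2) + b = 0 := by
    have h : (z1 - z2) * (a*(z1+z2) + b) = 0 := by linear_combination e1 - e2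
    exact (mul_eq_zero.mp h).resolve_left (sub_ne_zero.mpr h12)
  have d13 : a*(z1+z3) + b = 0 := by
    have h : (z1 - z3) * (a*(z1+z3) + b) = 0 := by linear_combination e1 - e3
    exact (mul_eq_zero.mp h).resolve_left (sub_ne_zero.mpr h13)
  have hA : a = 0 := by
    have h : (z2 - z3) * a = 0 := by linear_combination d12 - d13
    exact (mul_eq_zero.mp h).resolve_left (sub_ne_zero.mpr h23)
  have hBb : b = 0 := by linear_combination d12 - (z1+z2)*hA
  refine ⟨hA, hBb, ?_⟩
  linear_combination e1 - z1^2*hA - z1*hBb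

lemma quartic_fourth {c1 c2 c3 z1 z2 z3 : ℂ} (h1 : z1 ≠ 0) (h2 : z2 ≠ 0) (h3 : z3 ≠ 0)
    (h12 : z1 ≠ z2) (h13 : z1 ≠ z3) (h23 : z2 ≠ z3)
    (e1 : z1^4 + c3*z1^3 + c2*z1^2 + c1*z1 + 1 = 0)
    (e2 : z2^4 + c3*z2^3 + c2*z2^2 + c1*z2 + 1 = 0)
    (e3 : z3^4 + c3*z3^3 + c2*z3^2 + c1*z3 + 1 = 0) :
    ((z1*z2*z3)⁻¹)^4 + c3*((z1*z2*z3)⁻¹)^3 + c2*((z1*z2*z3)⁻¹)^2 + c1*((z1*z2*z3)⁻¹) + 1 = 0 := by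
  set w := (z1*z2*z3)⁻¹ with hw
  have hprod : z1*z2*z3*w = 1 := by
    rw [hw]
    field_simp
  have q1 : (c3 + (z1+z2+z3+w))*z1^2 + (c2 - (z1*z2+z1*z3+z2*z3 + w*(z1+z2+z3)))*z1
      + (c1 + (z1*z2*z3 + w*(z1*z2+z1*z3+z2*z3))) = 0 := by
    have h : z1*((c3 + (z1+z2+z3+w))*z1^2 + (c2 - (z1*z2+z1*z3+z2*z3 + w*(z1+z2+z3)))*z1
        + (c1 + (z1*z2*z3 + w*(z1*z2+z1*z3+z2*z3)))) = 0 := by linear_combination e1 + hprod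
    exact (mul_eq_zero.mp h).resolve_left h1
  have q2 : (c3 + (z1+z2+z3+w))*z2^2 + (c2 - (z1*z2+z1*z3+z2*z3 + w*(z1+z2+z3)))*z2
      + (c1 + (z1*z2*z3 + w*(z1*z2+z1*z3+z2*z3))) = 0 := by
    have h : z2*((c3 + (z1+z2+z3+w))*z2^2 + (c2 - (z1*z2+z1*z3+z2*z3 + w*(z1+z2+z3)))*z2
        + (c1 + (z1*z2*z3 + w*(z1*z2+z1*z3+z2*z3)))) = 0 := by linear_combination e2 + hprod
    exact (mul_eq_zero.mp h).resolve_left h2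
  have q3 : (c3 + (z1+z2+z3+w))*z3^2 + (c2 - (z1*z2+z1*z3+z2*z3 + w*(z1+z2+z3)))*z3
      + (c1 + (z1*z2*z3 + w*(z1*z2+z1*z3+z2*z3))) = 0 := by
    have h : z3*((c3 + (z1+z2+z3+w))*z3^2 + (c2 - (z1*z2+z1*z3+z2*z3 + w*(z1+z2+z3)))*z3
        + (c1 + (z1*z2*z3 + w*(z1*z2+z1*z3+z2*z3)))) = 0 := by linear_combination e3 + hprod
    exact (mul_eq_zero.mp h).resolve_left h3
  obtain ⟨hA, hBb, hC⟩ := quad_zero h12 h13 h23 q1 q2 q3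
  linear_combination w^3*hA + w^2*hBb + w*hC - hprod

lemma aux_main (m : ℕ) (o : EuclideanSpace ℝ (Fin 2)) (ρ : ℝ) (hρ : 0 < ρ)
    (U : ℂ) (hU4 : U^4 = -1)
    (X Y : Set (EuclideanSpace ℝ (Fin 2)))
    (hX : ∀ p ∈ X, ∃ θ : ℝ,
      p = planePt (Real.cos θ) (2*Real.sin θ) ∧ (Complex.exp (θ * Complex.I))^m = U)
    (hY : ∀ w : ℂ, w^m = -U → ∃ θ : ℝ,
      w = Complex.exp (θ * Complex.I) ∧ planePt (Real.cos θ) (2*Real.sin θ) ∈ Y)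
    (hd : Disjoint X Y)
    (hsub : (X ∪ Y) ∩ Metric.sphere o ρ ⊆ X)
    (p1 p2 p3 : EuclideanSpace ℝ (Fin 2))
    (hp1 : p1 ∈ (X ∪ Y) ∩ Metric.sphere o ρ) (hp2 : p2 ∈ (X ∪ Y) ∩ Metric.sphere o ρ)
    (hp3 : p3 ∈ (X ∪ Y) ∩ Metric.sphere o ρ)
    (h12 : p1 ≠ p2) (h13 : p1 ≠ p3) (h23 : p2 ≠ p3) : False := by
  obtain ⟨c1, c2, c3, hiff⟩ := sphere_quartic o ρ hρ
  obtain ⟨θ1, hpθ1, hz1U⟩ := hX p1 (hsub hp1)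
  obtain ⟨θ2, hpθ2, hz2U⟩ := hX p2 (hsub hp2)
  obtain ⟨θ3, hpθ3, hz3U⟩ := hX p3 (hsub hp3)
  set z1 := Complex.exp (θ1 * Complex.I) with hz1
  set z2 := Complex.exp (θ2 * Complex.I) with hz2
  set z3 := Complex.exp (θ3 * Complex.I) with hz3
  have hpt : ∀ θ θ' : ℝ, Complex.exp (θ * Complex.I) = Complex.exp (θ' * Complex.I) →
      planePt (Real.cos θ) (2*Real.sin θ) = planePt (Real.cos θ') (2*Real.sin θ') := by
    intro θ θ' h
    have hre : Real.cos θ = Real.cos θ' := by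
      rw [← Complex.exp_ofReal_mul_I_re, ← Complex.exp_ofReal_mul_I_re, h]
    have him : Real.sin θ = Real.sin θ' := by
      rw [← Complex.exp_ofReal_mul_I_im, ← Complex.exp_ofReal_mul_I_im, h]
    rw [hre, him]
  have hzz12 : z1 ≠ z2 := fun h => h12 (by rw [hpθ1, hpθ2]; exact hpt _ _ h)
  have hzz13 : z1 ≠ z3 := fun h => h13 (by rw [hpθ1, hpθ3]; exact hpt _ _ h)
  have hzz23 : z2 ≠ z3 := fun h => h23 (by rw [hpθ2, hpθ3]; exact hpt _ _ h)
  have he1 : z1^4 + c3*z1^3 + c2*z1^2 + c1*z1 + 1 = 0 := by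
    have h := (hiff θ1).mp (by rw [← hpθ1]; exact hp1.2)
    linear_combination h
  have he2 : z2^4 + c3*z2^3 + c2*z2^2 + c1*z2 + 1 = 0 := by
    have h := (hiff θ2).mp (by rw [← hpθ2]; exact hp2.2)
    linear_combination h
  have he3 : z3^4 + c3*z3^3 + c2*z3^2 + c1*z3 + 1 = 0 := by
    have h := (hiff θ3).mp (by rw [← hpθ3]; exact hp3.2)
    linear_combination h
  have hn1 : z1 ≠ 0 := Complex.exp_ne_zero _
  have hn2 : z2 ≠ 0 := Complex.exp_ne_zero _
  have hn3 : z3 ≠ 0 := Complex.exp_ne_zero _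
  have hfour := quartic_fourth hn1 hn2 hn3 hzz12 hzz13 hzz23 he1 he2 he3
  set w := (z1*z2*z3)⁻¹ with hwdef
  have hUne : U ≠ 0 := by
    intro h
    rw [h] at hU4
    norm_num at hU4
  have hwm : w^m = -U := by
    rw [hwdef, inv_pow, mul_pow, mul_pow, hz1U, hz2U, hz3U]
    have hmul : (U*U*U) * (-U) = 1 := by linear_combination -hU4
    exact inv_eq_of_mul_eq_one_right hmul
  obtain ⟨θ4, hwθ, hmemY⟩ := hY w hwm
  have hsph : planePt (Real.cos θ4) (2*Real.sin θ4) ∈ Metric.sphere o ρ := by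
    rw [hiff θ4, ← hwθ]
    exact hfour
  have hmemX : planePt (Real.cos θ4) (2*Real.sin θ4) ∈ X :=
    hsub ⟨Or.inr hmemY, hsph⟩
  exact Set.disjoint_left.mp hd hmemX hmemY

/-- For odd `m ≥ 3`, the `m` blue points
`(cos(2πk/m − π/4), 2·sin(2πk/m − π/4))` and the `m` red points
`(cos(2πk/m + 3π/4), 2·sin(2πk/m + 3π/4))` (for `k = 0, …, m−1`), all lying on the
ellipse `x² + 4y² = 1`, are disjoint, and no circle contains at least three of these
points with all the points of `B ∪ R` on the circle having the same color. -/
theorem ellipse_no_monochromatic_circle (m : ℕ) (hm : 3 ≤ m) (hodd : Odd m)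
    (B R : Set (EuclideanSpace ℝ (Fin 2)))
    (hB : B = (fun k : ℕ =>
      planePt (Real.cos (2 * Real.pi * k / m - Real.pi / 4))
              (2 * Real.sin (2 * Real.pi * k / m - Real.pi / 4))) '' Set.Iio m)
    (hR : R = (fun k : ℕ =>
      planePt (Real.cos (2 * Real.pi * k / m + 3 * Real.pi / 4))
              (2 * Real.sin (2 * Real.pi * k / m + 3 * Real.pi / 4))) '' Set.Iio m) :
    Disjoint B R ∧
      ¬ ∃ (o : EuclideanSpace ℝ (Fin 2)) (ρ : ℝ), 0 < ρ ∧
          3 ≤ ((B ∪ R) ∩ Metric.sphere o ρ).ncard ∧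
          (((B ∪ R) ∩ Metric.sphere o ρ) ⊆ B ∨ ((B ∪ R) ∩ Metric.sphere o ρ) ⊆ R) := by
  have hmne : (m:ℂ) ≠ 0 := Nat.cast_ne_zero.mpr (by omega)
  set T : ℂ := Complex.exp ((-(Real.pi/4) : ℝ) * Complex.I) ^ m with hT
  have hTne : T ≠ 0 := pow_ne_zero _ (Complex.exp_ne_zero _)
  have hexp_neg_pi : Complex.exp (-(Real.pi:ℂ) * Complex.I) = -1 := by
    rw [show -(Real.pi:ℂ) * Complex.I = -((Real.pi:ℂ) * Complex.I) by ring, Complex.exp_neg,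
      Complex.exp_pi_mul_I]
    norm_num
  have hT4 : T^4 = -1 := by
    rw [hT, ← pow_mul, mul_comm m 4, pow_mul, ← Complex.exp_nat_mul]
    rw [show ((4:ℕ):ℂ) * (((-(Real.pi/4) : ℝ):ℂ) * Complex.I) = -(Real.pi:ℂ) * Complex.I by
      push_cast; ring]
    rw [hexp_neg_pi]
    exact hodd.neg_one_pow
  -- blue exponential values
  have hBexp : ∀ k : ℕ,
      (Complex.exp ((2 * Real.pi * k / m - Real.pi / 4 : ℝ) * Complex.I))^m = T := by
    intro k
    rw [← Complex.exp_nat_mul, hT, ← Complex.exp_nat_mul]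
    rw [show ((m:ℂ)) * (((2 * Real.pi * k / m - Real.pi / 4 : ℝ)) * Complex.I)
        = ((k:ℤ):ℂ) * (2 * Real.pi * Complex.I) + (m:ℂ) * (((-(Real.pi/4) : ℝ)) * Complex.I) by
      push_cast; field_simp; ring]
    rw [Complex.exp_add, Complex.exp_int_mul_two_pi_mul_I, one_mul]
  have hRexp : ∀ k : ℕ,
      (Complex.exp ((2 * Real.pi * k / m + 3 * Real.pi / 4 : ℝ) * Complex.I))^m = -T := by
    intro k
    rw [← Complex.exp_nat_mul, hT, ← Complex.exp_nat_mul]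
    rw [show ((m:ℂ)) * (((2 * Real.pi * k / m + 3 * Real.pi / 4 : ℝ)) * Complex.I)
        = ((k:ℤ):ℂ) * (2 * Real.pi * Complex.I) + ((m:ℂ) * ((Real.pi:ℂ) * Complex.I)
            + (m:ℂ) * (((-(Real.pi/4) : ℝ)) * Complex.I)) by
      push_cast; field_simp; ring]
    rw [Complex.exp_add, Complex.exp_int_mul_two_pi_mul_I, one_mul, Complex.exp_add,
      Complex.exp_nat_mul, Complex.exp_pi_mul_I, hodd.neg_one_pow, Complex.exp_nat_mul]
    ring
  -- disjointness
  have hdisj : Disjoint B R := by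
    rw [hB, hR, Set.disjoint_left]
    rintro p ⟨k, hk, rfl⟩ ⟨j, hj, hpj⟩
    obtain ⟨hcos, hsin2⟩ := planePt_inj hpj
    have hsin : Real.sin (2 * Real.pi * j / m + 3 * Real.pi / 4)
        = Real.sin (2 * Real.pi * k / m - Real.pi / 4) := by linarith
    have hzeq : Complex.exp ((2 * Real.pi * j / m + 3 * Real.pi / 4 : ℝ) * Complex.I)
        = Complex.exp ((2 * Real.pi * k / m - Real.pi / 4 : ℝ) * Complex.I) := by
      rw [show ((2 * Real.pi * j / m + 3 * Real.pi / 4 : ℝ):ℂ) * Complex.I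
          = ((2 * Real.pi * j / m + 3 * Real.pi / 4 : ℝ):ℂ) * Complex.I from rfl]
      rw [Complex.exp_mul_I, Complex.exp_mul_I, ← Complex.ofReal_cos, ← Complex.ofReal_cos,
        ← Complex.ofReal_sin, ← Complex.ofReal_sin, hcos, hsin]
    have : -T = T := by rw [← hRexp j, ← hBexp k, hzeq]
    have : T = 0 := by linear_combination -(this)/2
    exact hTne this
  refine ⟨hdisj, ?_⟩
  rintro ⟨o, ρ, hρ, hcard, hmono⟩
  -- three distinct points
  have hfinB : B.Finite := hB ▸ (Set.finite_Iio m).image _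
  have hfinR : R.Finite := hR ▸ (Set.finite_Iio m).image _
  have hfin : ((B ∪ R) ∩ Metric.sphere o ρ).Finite := (hfinB.union hfinR).inter_of_left _
  obtain ⟨p1, p2, p3, hp1, hp2, hp3, h12, h13, h23⟩ :=
    (Set.two_lt_ncard_iff hfin).mp (by omega)
  -- characterizations
  have hBchar : ∀ p ∈ B, ∃ θ : ℝ,
      p = planePt (Real.cos θ) (2*Real.sin θ) ∧ (Complex.exp (θ * Complex.I))^m = T := by
    rw [hB]
    rintro p ⟨k, hk, rfl⟩
    exact ⟨_, rfl, hBexp k⟩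
  have hRchar : ∀ p ∈ R, ∃ θ : ℝ,
      p = planePt (Real.cos θ) (2*Real.sin θ) ∧ (Complex.exp (θ * Complex.I))^m = -T := by
    rw [hR]
    rintro p ⟨k, hk, rfl⟩
    exact ⟨_, rfl, hRexp k⟩
  have hprim := Complex.isPrimitiveRoot_exp m (by omega)
  have hBof : ∀ w : ℂ, w^m = T → ∃ θ : ℝ,
      w = Complex.exp (θ * Complex.I) ∧ planePt (Real.cos θ) (2*Real.sin θ) ∈ B := by
    intro w hw
    have hv : (w * Complex.exp (((Real.pi/4 : ℝ)) * Complex.I))^m = 1 := by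
      rw [mul_pow, hw, hT, ← mul_pow, ← Complex.exp_add]
      rw [show ((-(Real.pi/4) : ℝ):ℂ) * Complex.I + ((Real.pi/4 : ℝ):ℂ) * Complex.I = 0 by
        push_cast; ring]
      simp
    have : NeZero m := ⟨by omega⟩
    obtain ⟨k, hkm, hke⟩ := hprim.eq_pow_of_pow_eq_one hv
    refine ⟨2 * Real.pi * k / m - Real.pi / 4, ?_, ?_⟩
    · have hw' : w = Complex.exp (2 * Real.pi * Complex.I / m) ^ k
          * Complex.exp (((-(Real.pi/4) : ℝ)) * Complex.I) := by
        rw [hke]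
        rw [show w * Complex.exp (((Real.pi/4 : ℝ)) * Complex.I)
              * Complex.exp (((-(Real.pi/4) : ℝ)) * Complex.I)
            = w * Complex.exp (((Real.pi/4 : ℝ)) * Complex.I + ((-(Real.pi/4) : ℝ)) * Complex.I)
            from by rw [Complex.exp_add]; ring]
        rw [show ((Real.pi/4 : ℝ):ℂ) * Complex.I + ((-(Real.pi/4) : ℝ):ℂ) * Complex.I = 0 by
          push_cast; ring]
        simp
      rw [hw', ← Complex.exp_nat_mul, ← Complex.exp_add]
      congr 1
      push_cast
      field_simp
      ring
    · rw [hB]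
      exact ⟨k, hkm, rfl⟩
  have hRof : ∀ w : ℂ, w^m = -T → ∃ θ : ℝ,
      w = Complex.exp (θ * Complex.I) ∧ planePt (Real.cos θ) (2*Real.sin θ) ∈ R := by
    intro w hw
    have hv : (w * Complex.exp (((-(3*Real.pi/4) : ℝ)) * Complex.I))^m = 1 := by
      have h1 : Complex.exp (((-(Real.pi/4) : ℝ):ℂ) * Complex.I)
          * Complex.exp (((-(3*Real.pi/4) : ℝ):ℂ) * Complex.I) = -1 := by
        rw [← Complex.exp_add, show ((-(Real.pi/4) : ℝ):ℂ) * Complex.I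
            + ((-(3*Real.pi/4) : ℝ):ℂ) * Complex.I = -((Real.pi:ℂ) * Complex.I) by
          push_cast; ring, Complex.exp_neg, Complex.exp_pi_mul_I]
        norm_num
      rw [mul_pow, hw, hT]
      rw [show -Complex.exp (((-(Real.pi/4) : ℝ):ℂ) * Complex.I)^m
            * Complex.exp (((-(3*Real.pi/4) : ℝ):ℂ) * Complex.I)^m
          = -((Complex.exp (((-(Real.pi/4) : ℝ):ℂ) * Complex.I)
            * Complex.exp (((-(3*Real.pi/4) : ℝ):ℂ) * Complex.I))^m) by rw [mul_pow]; ring]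
      rw [h1, hodd.neg_one_pow]
      norm_num
    have : NeZero m := ⟨by omega⟩
    obtain ⟨k, hkm, hke⟩ := hprim.eq_pow_of_pow_eq_one hv
    refine ⟨2 * Real.pi * k / m + 3 * Real.pi / 4, ?_, ?_⟩
    · have hw' : w = Complex.exp (2 * Real.pi * Complex.I / m) ^ k
          * Complex.exp (((3*Real.pi/4 : ℝ)) * Complex.I) := by
        rw [hke]
        rw [show w * Complex.exp (((-(3*Real.pi/4) : ℝ)) * Complex.I)
              * Complex.exp (((3*Real.pi/4 : ℝ)) * Complex.I)
            = w * Complex.exp (((-(3*Real.pi/4) : ℝ)) * Complex.I + ((3*Real.pi/4 : ℝ)) * Complex.I)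
            from by rw [Complex.exp_add]; ring]
        rw [show ((-(3*Real.pi/4) : ℝ):ℂ) * Complex.I + ((3*Real.pi/4 : ℝ):ℂ) * Complex.I = 0 by
          push_cast; ring]
        simp
      rw [hw', ← Complex.exp_nat_mul, ← Complex.exp_add]
      congr 1
      push_cast
      field_simp
    · rw [hR]
      exact ⟨k, hkm, rfl⟩
  rcases hmono with hsub | hsub
  · exact aux_main m o ρ hρ T hT4 B R hBchar hRof hdisj hsub p1 p2 p3 hp1 hp2 hp3 h12 h13 h23
  · have hT4' : (-T)^4 = -1 := by rw [Even.neg_pow (by decide : Even 4), hT4]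
    have hBof' : ∀ w : ℂ, w^m = -(-T) → ∃ θ : ℝ,
        w = Complex.exp (θ * Complex.I) ∧ planePt (Real.cos θ) (2*Real.sin θ) ∈ B := by
      intro w hw
      exact hBof w (by rwa [neg_neg] at hw)
    rw [Set.union_comm] at hsub hp1 hp2 hp3
    exact aux_main m o ρ hρ (-T) hT4' R B hRchar hBof' hdisj.symm hsub p1 p2 p3
      hp1 hp2 hp3 h12 h13 h23
end
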